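/- arXiv:0904.2667 — 10 statements merged into one kernel-verified Lean document; each statement's English description precedes it below -/
import Mathlib

section
/- Division lemma: Let f(w) = Σᵢ wⁱaᵢ be a power series with quaternionic coefficients converging on the ball B_R of radius R > 0, and let α ∈ B_R. Then there exist a unique power series g converging on B_R and a unique quaternion r such that f(w) = (w − α) * g(w) + r, where * denotes the product of power series treating w as a central variable. Moreover r = f(α). -/
set_option maxHeartbeats 1000000
noncomputable section

/-- The real quaternions. -/
abbrev Quat := Quaternion ℝ

/-- Evaluation of a quaternionic power series with right coefficients `a` at `q`:
`f(q) = Σᵢ qⁱ aᵢ` (the sum is `0` by convention if the series does not converge). -/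
def pev (a : ℕ → Quat) (q : Quat) : Quat := ∑' i, q ^ i * a i

/-- The power series with coefficients `a` converges on the open ball of radius `R`. -/
def ConvOn (a : ℕ → Quat) (R : ℝ) : Prop :=
  ∀ q : Quat, ‖q‖ < R → Summable fun i => q ^ i * a i

/-- Coefficients of the star product `f * g` (convolution of coefficients). -/
def scoef (a b : ℕ → Quat) : ℕ → Quat :=
  fun k => ∑ p ∈ Finset.HasAntidiagonal.antidiagonal k, a p.1 * b p.2

/-- Coefficients of the conjugate series `conj f`. -/
def cconj (a : ℕ → Quat) : ℕ → Quat := fun i => star (a i)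

/-- Coefficients of the normal (symmetrized) series `N(f) = f * conj f`. -/
def Ncoef (a : ℕ → Quat) : ℕ → Quat := scoef a (cconj a)

/-- The conjugacy class of `α`: quaternions with the same trace and the same norm. -/
def Sset (α : Quat) : Set Quat := {x | x + star x = α + star α ∧ ‖x‖ = ‖α‖}

/-- The characteristic polynomial of `α`, evaluated at `q`:
`Δ_α(q) = q² - q·tr(α) + |α|²`. -/
def Δev (α q : Quat) : Quat := q ^ 2 - q * (α + star α) + algebraMap ℝ Quat (‖α‖ ^ 2)

/-- Coefficients of the linear polynomial `w - α`. -/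
def lin (α : Quat) : ℕ → Quat := fun k => if k = 0 then -α else if k = 1 then 1 else 0

/-- Zero set of the series `a` in the ball of radius `R`. -/
def Vset (a : ℕ → Quat) (R : ℝ) : Set Quat := {q | ‖q‖ < R ∧ pev a q = 0}

lemma quat_norm_real (x : ℝ) : ‖(x : Quat)‖ = |x| := by
  rw [Quaternion.norm_coe]; exact Real.norm_eq_abs x

lemma norm_summable_of_convOn {a : ℕ → Quat} {R : ℝ} (ha : ConvOn a R)
    {ρ : ℝ} (h0 : 0 ≤ ρ) (hρ : ρ < R) : Summable fun n => ρ ^ n * ‖a n‖ := by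
  have h1 : Summable fun n => ((ρ : Quat)) ^ n * a n := by
    apply ha; rw [quat_norm_real, abs_of_nonneg h0]; exact hρ
  exact (summable_norm_iff.mpr h1).congr fun n => by
    rw [norm_mul, norm_pow, quat_norm_real, abs_of_nonneg h0]

lemma tail_summable {a : ℕ → Quat} {ρ : ℝ} (hρ : 0 < ρ)
    (hs : Summable fun n => ρ ^ n * ‖a n‖) {v : ℝ} (h0 : 0 ≤ v) (hv : v ≤ ρ) (k : ℕ) :
    Summable fun j => v ^ j * ‖a (k + 1 + j)‖ := by
  have h1 : Summable fun j => ρ ^ (j + (k+1)) * ‖a (j + (k+1))‖ :=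
    (summable_nat_add_iff (f := fun n => ρ ^ n * ‖a n‖) (k+1)).mpr hs
  have h2 : Summable fun j => (ρ : ℝ)⁻¹ ^ (k+1) * (ρ ^ (j + (k+1)) * ‖a (j + (k+1))‖) :=
    h1.mul_left _
  refine Summable.of_nonneg_of_le (fun j => by positivity) (fun j => ?_) h2
  have hρ' : (ρ:ℝ) ≠ 0 := ne_of_gt hρ
  calc v ^ j * ‖a (k+1+j)‖ ≤ ρ ^ j * ‖a (k+1+j)‖ := by gcongr
    _ = ρ⁻¹ ^ (k+1) * (ρ ^ (j+(k+1)) * ‖a (j+(k+1))‖) := by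
        rw [show k+1+j = j+(k+1) by omega, pow_add, inv_pow]
        field_simp
        ring

lemma scoef_lin (α : Quat) (g : ℕ → Quat) (k : ℕ) :
    scoef (lin α) g k = (if k = 0 then 0 else g (k-1)) - α * g k := by
  unfold scoef
  rw [Finset.Nat.sum_antidiagonal_eq_sum_range_succ_mk]
  cases k with
  | zero => simp [lin, neg_mul, sub_eq_add_neg]
  | succ n =>
    rw [Finset.sum_range_succ', Finset.sum_range_succ']
    simp [lin, neg_mul, sub_eq_add_neg, add_comm]

lemma convOn_scoef_lin (α : Quat) {g : ℕ → Quat} {R : ℝ} (hg : ConvOn g R) :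
    ConvOn (scoef (lin α) g) R := by
  intro q hq
  have hgq : Summable fun k => q ^ k * g k := hg q hq
  have h1 : Summable fun k => q ^ k * (α * g k) := by
    refine Summable.of_norm (((summable_norm_iff.mpr hgq).mul_left ‖α‖).congr fun k => ?_)
    simp only [norm_mul, norm_pow]; ring
  have h2 : Summable fun k => (if k = 0 then (0:Quat) else q ^ k * g (k-1)) := by
    refine (summable_nat_add_iff (f := fun k => if k = 0 then (0:Quat) else q ^ k * g (k-1)) 1).mp ?_
    exact (hgq.mul_left q).congr fun n => by
      simp only [Nat.add_eq_zero, one_ne_zero, and_false, if_false, Nat.add_sub_cancel,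
        ← mul_assoc, ← pow_succ']
  refine (h2.sub h1).congr fun k => ?_
  rw [scoef_lin, mul_sub]
  congr 1
  cases k <;> simp

lemma pev_scoef_lin_self (α : Quat) {g : ℕ → Quat} {R : ℝ}
    (hg : ConvOn g R) (hα : ‖α‖ < R) : pev (scoef (lin α) g) α = 0 := by
  have hgα : Summable fun k => α ^ k * g k := hg α hα
  have hG : Summable fun k => α ^ (k+1) * g k :=
    (hgα.mul_left α).congr fun k => by rw [← mul_assoc, ← pow_succ']
  have hF : Summable fun k => (if k = 0 then (0:Quat) else α ^ k * g (k-1)) := by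
    refine (summable_nat_add_iff (f := fun k => if k = 0 then (0:Quat) else α ^ k * g (k-1)) 1).mp ?_
    exact hG.congr fun n => by simp
  have key : ∀ k, α ^ k * scoef (lin α) g k
      = (if k = 0 then (0:Quat) else α ^ k * g (k-1)) - α ^ (k+1) * g k := by
    intro k
    rw [scoef_lin, mul_sub, ← mul_assoc, ← pow_succ]
    congr 1
    cases k <;> simp
  have hshift : ∀ n : ℕ, (if n+1 = 0 then (0:Quat) else α ^ (n+1) * g (n+1-1)) = α ^ (n+1) * g n :=
    fun n => by simp
  unfold pev
  calc ∑' k, α ^ k * scoef (lin α) g k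
      = ∑' k, ((if k = 0 then (0:Quat) else α ^ k * g (k-1)) - α ^ (k+1) * g k) :=
        tsum_congr key
    _ = (∑' k, (if k = 0 then (0:Quat) else α ^ k * g (k-1))) - ∑' k, α ^ (k+1) * g k :=
        Summable.tsum_sub hF hG
    _ = 0 := by
        rw [Summable.tsum_eq_zero_add hF, tsum_congr hshift]
        simp

lemma coeff_eq_zero {c : ℕ → Quat} {ρ : ℝ} (hρ : 0 < ρ)
    (hs : Summable fun k => ρ ^ k * ‖c k‖)
    (hz : ∀ t : ℝ, |t| ≤ ρ → ∑' k, ((t : Quat)) ^ k * c k = 0) (n : ℕ) : c n = 0 := by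
  induction n using Nat.strong_induction_on with
  | _ n ih =>
    have hM : Summable fun j => ρ ^ j * ‖c (n + 1 + j)‖ :=
      tail_summable hρ hs hρ.le le_rfl n
    set M : ℝ := ∑' j, ρ ^ j * ‖c (n + 1 + j)‖ with hMdef
    have hM0 : 0 ≤ M := tsum_nonneg fun j => by positivity
    -- main estimate
    have est : ∀ t : ℝ, 0 < t → t ≤ ρ → ‖c n‖ ≤ t * M := by
      intro t ht0 htρ
      have htabs : |t| ≤ ρ := by rwa [abs_of_pos ht0]
      have htn : ∀ k, ‖((t:Quat)) ^ k * c k‖ = t ^ k * ‖c k‖ := fun k => by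
        rw [norm_mul, norm_pow, quat_norm_real, abs_of_pos ht0]
      have htsum : Summable fun k => ((t:Quat)) ^ k * c k := by
        refine Summable.of_norm (Summable.of_nonneg_of_le (fun k => norm_nonneg _)
          (fun k => ?_) hs)
        rw [htn k]
        gcongr
      have hts : Summable fun k => t ^ k * ‖c k‖ :=
        (summable_norm_iff.mpr htsum).congr fun k => htn k
      have htail : Summable fun j => t ^ j * ‖c (n + 1 + j)‖ :=
        tail_summable hρ hs ht0.le htρ n
      have htailq : Summable fun j => ((t:Quat)) ^ (j + (n+1)) * c (j + (n+1)) :=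
        (summable_nat_add_iff (f := fun k => ((t:Quat)) ^ k * c k) (n+1)).mpr htsum
      have htailqn : Summable fun j => ‖((t:Quat)) ^ (j + (n+1)) * c (j + (n+1))‖ := by
        refine ((htail.mul_left (t ^ (n+1))).congr fun j => ?_)
        rw [htn, show n+1+j = j+(n+1) by omega, pow_add]
        ring
      have hsplit := Summable.sum_add_tsum_nat_add (f := fun k => ((t:Quat)) ^ k * c k) (n+1) htsum
      rw [hz t htabs] at hsplit
      have hfin : ∑ k ∈ Finset.range (n+1), ((t:Quat)) ^ k * c k = ((t:Quat)) ^ n * c n := by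
        refine Finset.sum_eq_single n (fun k hk hkn => ?_) (fun h => absurd (Finset.self_mem_range_succ n) h)
        rw [ih k (by have := Finset.mem_range.mp hk; omega), mul_zero]
      rw [hfin] at hsplit
      have hkey : ((t:Quat)) ^ n * c n = - ∑' j, ((t:Quat)) ^ (j + (n+1)) * c (j + (n+1)) := by
        linear_combination (norm := module) hsplit
      have hnorm1 : t ^ n * ‖c n‖ ≤ ∑' j, ‖((t:Quat)) ^ (j + (n+1)) * c (j + (n+1))‖ := by
        rw [← htn n]
        calc ‖((t:Quat)) ^ n * c n‖ = ‖∑' j, ((t:Quat)) ^ (j + (n+1)) * c (j + (n+1))‖ := by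
              rw [hkey, norm_neg]
          _ ≤ _ := norm_tsum_le_tsum_norm htailqn
      have hnorm2 : ∑' j, ‖((t:Quat)) ^ (j + (n+1)) * c (j + (n+1))‖
          ≤ t ^ (n+1) * M := by
        rw [hMdef, ← tsum_mul_left]
        refine Summable.tsum_le_tsum (fun j => ?_) htailqn (hM.mul_left _)
        rw [htn, show j + (n+1) = n+1+j by omega, pow_add]
        have : t ^ (n+1) * t ^ j * ‖c (n+1+j)‖ ≤ t ^ (n+1) * ρ ^ j * ‖c (n+1+j)‖ := by
          gcongr
        calc t ^ (n+1) * t ^ j * ‖c (n+1+j)‖ ≤ t ^ (n+1) * ρ ^ j * ‖c (n+1+j)‖ := this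
          _ = t ^ (n+1) * (ρ ^ j * ‖c (n+1+j)‖) := by ring
      have hfinal : t ^ n * ‖c n‖ ≤ t ^ (n+1) * M := le_trans hnorm1 hnorm2
      have hpow : 0 < t ^ n := pow_pos ht0 n
      rw [pow_succ'] at hfinal
      nlinarith [hfinal, hpow]
    -- conclude ‖c n‖ = 0
    have : ‖c n‖ ≤ 0 := by
      by_contra hcon
      push_neg at hcon
      set t := min ρ (‖c n‖ / (2 * (M + 1))) with htdef
      have ht0 : 0 < t := lt_min hρ (by positivity)
      have h1 := est t ht0 (min_le_left _ _)
      have h2 : t ≤ ‖c n‖ / (2 * (M + 1)) := min_le_right _ _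
      have h3 : t * M ≤ (‖c n‖ / (2 * (M + 1))) * M := by gcongr
      have h4 : (‖c n‖ / (2 * (M + 1))) * M < ‖c n‖ := by
        rw [div_mul_eq_mul_div, div_lt_iff₀ (by positivity)]
        nlinarith
      linarith
    exact norm_le_zero_iff.mp this

def gdiv (a : ℕ → Quat) (α : Quat) : ℕ → Quat := fun k => ∑' j, α ^ j * a (k + 1 + j)

lemma tail_summable_quat {a : ℕ → Quat} {R : ℝ} (ha : ConvOn a R)
    {α : Quat} (hα : ‖α‖ < R) (k : ℕ) : Summable fun j => α ^ j * a (k + 1 + j) := by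
  set ρ := (‖α‖ + R)/2 with hρdef
  have hn := norm_nonneg α
  have hρ0 : 0 < ρ := by rw [hρdef]; linarith
  have h1 : ‖α‖ ≤ ρ := by rw [hρdef]; linarith
  have h2 : ρ < R := by rw [hρdef]; linarith
  refine Summable.of_norm
    ((tail_summable hρ0 (norm_summable_of_convOn ha hρ0.le h2) (norm_nonneg α) h1 k).congr
      fun j => ?_)
  rw [norm_mul, norm_pow]

lemma convOn_gdiv {a : ℕ → Quat} {R : ℝ} (hR : 0 < R) (ha : ConvOn a R)
    {α : Quat} (hα : ‖α‖ < R) : ConvOn (gdiv a α) R := by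
  intro q hq
  set u := ‖q‖ with hu
  set v := ‖α‖ with hv
  set m := max u v with hm
  have hu0 : 0 ≤ u := norm_nonneg q
  have hv0 : 0 ≤ v := norm_nonneg α
  have hm0 : 0 ≤ m := le_trans hu0 (le_max_left _ _)
  have hmR : m < R := max_lt hq hα
  set ρ := (m + R)/2 with hρdef
  have hρ0 : 0 < ρ := by rw [hρdef]; linarith
  have hmρ : m < ρ := by rw [hρdef]; linarith
  have hρR : ρ < R := by rw [hρdef]; linarith
  have hsum : Summable fun n => ρ ^ n * ‖a n‖ := norm_summable_of_convOn ha hρ0.le hρR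
  obtain ⟨M, hM⟩ : ∃ M, ∀ n, ρ ^ n * ‖a n‖ ≤ M := by
    obtain ⟨M, hM⟩ := hsum.tendsto_atTop_zero.bddAbove_range
    exact ⟨M, fun n => hM (Set.mem_range_self n)⟩
  have hM0 : 0 ≤ M := le_trans (by positivity) (hM 0)
  set s := m / ρ with hs
  have hs0 : 0 ≤ s := div_nonneg hm0 hρ0.le
  have hs1 : s < 1 := (div_lt_one hρ0).mpr hmρ
  have hsρ : s * ρ = m := div_mul_cancel₀ m (ne_of_gt hρ0)
  set F : ℕ × ℕ → ℝ := fun p => u ^ p.1 * (v ^ p.2 * ‖a (p.1 + 1 + p.2)‖) with hF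
  have hF0 : ∀ p, 0 ≤ F p := fun p => by
    have := norm_nonneg (a (p.1 + 1 + p.2)); positivity
  have hFs : Summable F := by
    have hgeo : Summable fun p : ℕ × ℕ => (s ^ p.1) * ((M/ρ) * s ^ p.2) :=
      Summable.mul_of_nonneg (summable_geometric_of_lt_one hs0 hs1)
        ((summable_geometric_of_lt_one hs0 hs1).mul_left (M/ρ))
        (fun k => by positivity) (fun j => by positivity)
    refine Summable.of_nonneg_of_le hF0 (fun p => ?_) hgeo
    obtain ⟨k, j⟩ := p
    have hna : 0 ≤ ‖a (k + 1 + j)‖ := norm_nonneg _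
    have huκ : u ≤ s * ρ := by rw [hsρ]; exact le_max_left _ _
    have hvκ : v ≤ s * ρ := by rw [hsρ]; exact le_max_right _ _
    have hinner : ρ ^ (k + j) * ‖a (k + 1 + j)‖ ≤ M / ρ := by
      rw [le_div_iff₀ hρ0]
      calc ρ ^ (k + j) * ‖a (k + 1 + j)‖ * ρ = ρ ^ (k + 1 + j) * ‖a (k + 1 + j)‖ := by
            rw [show k+1+j = (k+j)+1 by omega, pow_succ]; ring
        _ ≤ M := hM _
    calc F (k, j) = u ^ k * (v ^ j * ‖a (k + 1 + j)‖) := rfl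
      _ ≤ (s * ρ) ^ k * ((s * ρ) ^ j * ‖a (k + 1 + j)‖) := by gcongr
      _ = s ^ k * s ^ j * (ρ ^ (k + j) * ‖a (k + 1 + j)‖) := by
          rw [mul_pow, mul_pow, pow_add]; ring
      _ ≤ s ^ k * s ^ j * (M / ρ) := by
          have hsk : (0:ℝ) ≤ s ^ k * s ^ j := by positivity
          exact mul_le_mul_of_nonneg_left hinner hsk
      _ = s ^ k * ((M/ρ) * s ^ j) := by ring
  have hfac := (summable_prod_of_nonneg hF0).mp hFs
  refine Summable.of_norm (Summable.of_nonneg_of_le (fun k => norm_nonneg _)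
    (fun k => ?_) hfac.2)
  have hvρ : v ≤ ρ := le_trans (le_max_right u v) hmρ.le
  have hns : Summable fun j => ‖α ^ j * a (k + 1 + j)‖ :=
    (tail_summable hρ0 hsum hv0 hvρ k).congr fun j => by rw [norm_mul, norm_pow]
  calc ‖q ^ k * gdiv a α k‖ = u ^ k * ‖gdiv a α k‖ := by rw [norm_mul, norm_pow]
    _ ≤ u ^ k * ∑' j, ‖α ^ j * a (k + 1 + j)‖ := by
        have := norm_tsum_le_tsum_norm hns
        exact mul_le_mul_of_nonneg_left this (by positivity)
    _ = ∑' j, u ^ k * ‖α ^ j * a (k + 1 + j)‖ := tsum_mul_left.symm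
    _ = ∑' j, F (k, j) := tsum_congr fun j => by rw [norm_mul, norm_pow, hF]

lemma gdiv_key {a : ℕ → Quat} {R : ℝ} (ha : ConvOn a R)
    {α : Quat} (hα : ‖α‖ < R) (k : ℕ) :
    gdiv a α k = a (k+1) + α * gdiv a α (k+1) := by
  have hT := tail_summable_quat ha hα
  have h1 : α * gdiv a α (k+1) = ∑' j, α ^ (j+1) * a (k + 1 + (j+1)) := by
    rw [gdiv, ← tsum_mul_left]
    exact tsum_congr fun j => by
      rw [show k+1+(j+1) = k+1+1+j by omega, ← mul_assoc, ← pow_succ']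
  rw [h1, gdiv, Summable.tsum_eq_zero_add (hT k)]
  simp only [pow_zero, one_mul, Nat.add_zero]

lemma pev_self_eq {a : ℕ → Quat} {R : ℝ} (ha : ConvOn a R)
    {α : Quat} (hα : ‖α‖ < R) :
    pev a α = a 0 + α * gdiv a α 0 := by
  have h1 : α * gdiv a α 0 = ∑' j, α ^ (j+1) * a (j+1) := by
    rw [gdiv, ← tsum_mul_left]
    exact tsum_congr fun j => by
      rw [show 0+1+j = j+1 by omega, ← mul_assoc, ← pow_succ']
  rw [pev, Summable.tsum_eq_zero_add (ha α hα), h1]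
  simp only [pow_zero, one_mul]

lemma gdiv_coeff {a : ℕ → Quat} {R : ℝ} (ha : ConvOn a R)
    {α : Quat} (hα : ‖α‖ < R) (k : ℕ) :
    scoef (lin α) (gdiv a α) k = a k - (if k = 0 then pev a α else 0) := by
  rw [scoef_lin]
  cases k with
  | zero =>
    simp only [if_pos rfl]
    rw [pev_self_eq ha hα]
    simp
  | succ n =>
    simp only [Nat.succ_ne_zero, if_false, Nat.add_sub_cancel]
    rw [gdiv_key ha hα n]
    abel


/-- Division lemma for quaternionic power series: for `f` convergent on `B_R` and
`α ∈ B_R`, there exist a unique power series `g` converging on `B_R` and a unique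
quaternion `r` with `f(w) = (w - α) * g(w) + r`; moreover `r = f(α)`. -/
theorem stmt2 (a : ℕ → Quat) (R : ℝ) (hR : 0 < R) (ha : ConvOn a R)
    (α : Quat) (hα : ‖α‖ < R) :
    (∃! p : (ℕ → Quat) × Quat, ConvOn p.1 R ∧
      ∀ q : Quat, ‖q‖ < R → pev a q = pev (scoef (lin α) p.1) q + p.2) ∧
    (∀ (g : ℕ → Quat) (r : Quat), ConvOn g R →
      (∀ q : Quat, ‖q‖ < R → pev a q = pev (scoef (lin α) g) q + r) →
      r = pev a α) := by
  have part2 : ∀ (g : ℕ → Quat) (r : Quat), ConvOn g R →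
      (∀ q : Quat, ‖q‖ < R → pev a q = pev (scoef (lin α) g) q + r) → r = pev a α := by
    intro g r hg hpr
    have h := hpr α hα
    rw [pev_scoef_lin_self α hg hα, zero_add] at h
    exact h.symm
  refine ⟨?_, part2⟩
  have hcg0 : ConvOn (gdiv a α) R := convOn_gdiv hR ha hα
  have hev : ∀ q : Quat, ‖q‖ < R → pev a q = pev (scoef (lin α) (gdiv a α)) q + pev a α := by
    intro q hq
    have hc : Summable fun k => q ^ k * scoef (lin α) (gdiv a α) k :=
      convOn_scoef_lin α hcg0 q hq
    have hd : Summable fun k : ℕ => (if k = 0 then pev a α else (0:Quat)) := by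
      apply summable_of_ne_finset_zero (s := ({0} : Finset ℕ))
      intro k hk
      simp only [Finset.mem_singleton] at hk
      simp [hk]
    have hco : ∀ k, q ^ k * a k
        = q ^ k * scoef (lin α) (gdiv a α) k + (if k = 0 then pev a α else 0) := by
      intro k
      rw [gdiv_coeff ha hα k, mul_sub]
      cases k with
      | zero => simp
      | succ n => simp
    unfold pev
    rw [tsum_congr hco, Summable.tsum_add hc hd, tsum_ite_eq]
    rfl
  refine ⟨(gdiv a α, pev a α), ⟨hcg0, hev⟩, ?_⟩
  rintro ⟨g, r⟩ ⟨hg, hev'⟩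
  have hr : r = pev a α := part2 g r hg hev'
  set c : ℕ → Quat := fun k => scoef (lin α) g k - scoef (lin α) (gdiv a α) k with hcdef
  have hcsum : ∀ q : Quat, ‖q‖ < R → Summable fun k => q ^ k * c k := by
    intro q hq
    have h1 : Summable fun k => q ^ k * scoef (lin α) g k := convOn_scoef_lin α hg q hq
    have h2 : Summable fun k => q ^ k * scoef (lin α) (gdiv a α) k :=
      convOn_scoef_lin α hcg0 q hq
    exact (h1.sub h2).congr fun k => (mul_sub _ _ _).symm
  have hzero : ∀ q : Quat, ‖q‖ < R → ∑' k, q ^ k * c k = 0 := by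
    intro q hq
    have h1 : Summable fun k => q ^ k * scoef (lin α) g k := convOn_scoef_lin α hg q hq
    have h2 : Summable fun k => q ^ k * scoef (lin α) (gdiv a α) k :=
      convOn_scoef_lin α hcg0 q hq
    have heq : pev (scoef (lin α) g) q = pev (scoef (lin α) (gdiv a α)) q := by
      have h := (hev' q hq).symm.trans (hev q hq)
      rw [hr] at h
      exact add_right_cancel h
    calc ∑' k, q ^ k * c k
        = ∑' k, (q ^ k * scoef (lin α) g k - q ^ k * scoef (lin α) (gdiv a α) k) :=
          tsum_congr fun k => mul_sub _ _ _
      _ = (∑' k, q ^ k * scoef (lin α) g k) - ∑' k, q ^ k * scoef (lin α) (gdiv a α) k :=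
          Summable.tsum_sub h1 h2
      _ = 0 := by
          have := heq
          unfold pev at this
          rw [this, sub_self]
  have hc0 : ∀ k, c k = 0 := by
    have hρ0 : 0 < R / 2 := by linarith
    have hρR : R / 2 < R := by linarith
    have hsr : Summable fun k => (R/2) ^ k * ‖c k‖ := by
      have h1 : Summable fun k => (((R/2 : ℝ)) : Quat) ^ k * c k := by
        apply hcsum
        rw [quat_norm_real, abs_of_pos hρ0]; exact hρR
      exact (summable_norm_iff.mpr h1).congr fun k => by
        rw [norm_mul, norm_pow, quat_norm_real, abs_of_pos hρ0]
    refine coeff_eq_zero hρ0 hsr (fun t ht => ?_)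
    apply hzero
    rw [quat_norm_real]
    linarith
  have hrec : ∀ k, g k - gdiv a α k = α * (g (k+1) - gdiv a α (k+1)) := by
    intro k
    have h := hc0 (k+1)
    rw [hcdef] at h
    simp only [scoef_lin, Nat.succ_ne_zero, if_false, Nat.add_sub_cancel] at h
    have h2 : g k - gdiv a α k - (α * g (k+1) - α * gdiv a α (k+1)) = 0 := by
      rw [← h]; abel
    rw [mul_sub]
    exact sub_eq_zero.mp h2
  have hbase : α * (g 0 - gdiv a α 0) = 0 := by
    have h := hc0 0
    rw [hcdef] at h
    simp only [scoef_lin, reduceIte] at h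
    have h2 : α * gdiv a α 0 - α * g 0 = 0 := by
      rw [← h]; abel
    rw [mul_sub, sub_eq_zero]
    exact (sub_eq_zero.mp h2).symm
  have hgg : ∀ k, g k - gdiv a α k = 0 := by
    by_cases hα0 : α = 0
    · intro k; rw [hrec k, hα0, zero_mul]
    · have hb0 : g 0 - gdiv a α 0 = 0 := by
        rcases mul_eq_zero.mp hbase with h | h
        · exact absurd h hα0
        · exact h
      intro k
      induction k with
      | zero => exact hb0
      | succ n ihn =>
        have h := hrec n
        rw [ihn] at h
        rcases mul_eq_zero.mp h.symm with h' | h'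
        · exact absurd h' hα0
        · exact h'
  have : g = gdiv a α := funext fun k => sub_eq_zero.mp (hgg k)
  exact Prod.ext this hr
end
end

section
/- If g(w) = Σₙ wⁿ bₙ where bₙ := α^{−1−n} · Σ_{j=n+1}^∞ αʲ aⱼ for a nonzero quaternion α with |α| < R, and Σⱼ wʲ aⱼ has radius of convergence ≥ R, then the power series Σₙ wⁿ bₙ converges at every x with |x| < R. -/
noncomputable section

/-- If `bₙ = α^(−1−n) · Σ_{j>n} αʲ aⱼ` for a nonzero quaternion `α` with `‖α‖ < R`,
where `Σ wʲaⱼ` has radius of convergence at least `R`, then `Σ wⁿbₙ` converges at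
every `x` with `‖x‖ < R`. -/
theorem stmt3 (a : ℕ → Quat) (R : ℝ) (ha : ConvOn a R)
    (α : Quat) (hα0 : α ≠ 0) (hα : ‖α‖ < R)
    (b : ℕ → Quat)
    (hb : ∀ n : ℕ, b n = α⁻¹ ^ (n + 1) * ∑' j : ℕ, α ^ (j + n + 1) * a (j + n + 1)) :
    ∀ x : Quat, ‖x‖ < R → Summable fun n => x ^ n * b n := by
  intro x hx
  obtain ⟨t, ht1, ht2⟩ := exists_between (max_lt hx hα)
  have hxt : ‖x‖ < t := lt_of_le_of_lt (le_max_left _ _) ht1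
  have hαt : ‖α‖ < t := lt_of_le_of_lt (le_max_right _ _) ht1
  have hα0' : 0 < ‖α‖ := norm_pos_iff.mpr hα0
  have htpos : (0 : ℝ) < t := lt_trans hα0' hαt
  -- summability of the original series at the real scalar `t`
  have hq : Summable fun i => (algebraMap ℝ Quat t) ^ i * a i := by
    apply ha
    rw [norm_algebraMap', Real.norm_eq_abs, abs_of_pos htpos]
    exact ht2
  -- a uniform bound `‖a i‖ ≤ C / t ^ i`
  have hnorm : ∀ i, ‖(algebraMap ℝ Quat t) ^ i * a i‖ = t ^ i * ‖a i‖ := by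
    intro i
    rw [norm_mul, norm_pow, norm_algebraMap', Real.norm_eq_abs, abs_of_pos htpos]
  obtain ⟨C, hC⟩ := (hq.tendsto_atTop_zero.norm).bddAbove_range
  have hCb : ∀ i, ‖a i‖ ≤ C / t ^ i := by
    intro i
    have h1 : t ^ i * ‖a i‖ ≤ C := by
      rw [← hnorm i]; exact hC ⟨i, rfl⟩
    rw [le_div_iff₀ (pow_pos htpos i)]
    linarith [h1]
  have hC0 : 0 ≤ C := le_trans (norm_nonneg ((algebraMap ℝ Quat t) ^ 0 * a 0)) (hC ⟨0, rfl⟩)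
  set r : ℝ := ‖α‖ / t with hr_def
  have hr0 : 0 ≤ r := div_nonneg (norm_nonneg _) (le_of_lt htpos)
  have hr1 : r < 1 := (div_lt_one htpos).mpr hαt
  -- bound on the terms of the inner series
  have hterm : ∀ n j : ℕ, ‖α ^ (j + n + 1) * a (j + n + 1)‖ ≤ C * r ^ (n + 1) * r ^ j := by
    intro n j
    rw [norm_mul, norm_pow]
    calc ‖α‖ ^ (j + n + 1) * ‖a (j + n + 1)‖
        ≤ ‖α‖ ^ (j + n + 1) * (C / t ^ (j + n + 1)) := by
          exact mul_le_mul_of_nonneg_left (hCb _) (pow_nonneg (norm_nonneg _) _)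
      _ = C * r ^ (j + n + 1) := by
          rw [hr_def, div_pow]; field_simp
      _ = C * r ^ (n + 1) * r ^ j := by
          rw [show j + n + 1 = (n + 1) + j by ring, pow_add]; ring
  have hgeo : Summable fun j : ℕ => r ^ j := summable_geometric_of_lt_one hr0 hr1
  have hinner_sum : ∀ n, Summable fun j : ℕ => ‖α ^ (j + n + 1) * a (j + n + 1)‖ := by
    intro n
    exact Summable.of_nonneg_of_le (fun j => norm_nonneg _) (hterm n)
      ((hgeo.mul_left (C * r ^ (n + 1))))
  -- bound on `‖b n‖`
  have hbn : ∀ n, ‖b n‖ ≤ C * (1 - r)⁻¹ * (t⁻¹) ^ (n + 1) := by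
    intro n
    rw [hb n, norm_mul, norm_pow, norm_inv]
    have h1 : ‖∑' j : ℕ, α ^ (j + n + 1) * a (j + n + 1)‖
        ≤ C * r ^ (n + 1) * (1 - r)⁻¹ := by
      calc ‖∑' j : ℕ, α ^ (j + n + 1) * a (j + n + 1)‖
          ≤ ∑' j : ℕ, ‖α ^ (j + n + 1) * a (j + n + 1)‖ := norm_tsum_le_tsum_norm (hinner_sum n)
        _ ≤ ∑' j : ℕ, C * r ^ (n + 1) * r ^ j := by
            exact Summable.tsum_le_tsum (hterm n) (hinner_sum n) (hgeo.mul_left _)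
        _ = C * r ^ (n + 1) * (1 - r)⁻¹ := by
            rw [tsum_mul_left, tsum_geometric_of_lt_one hr0 hr1]
    calc ‖α‖⁻¹ ^ (n + 1) * ‖∑' j : ℕ, α ^ (j + n + 1) * a (j + n + 1)‖
        ≤ ‖α‖⁻¹ ^ (n + 1) * (C * r ^ (n + 1) * (1 - r)⁻¹) := by
          exact mul_le_mul_of_nonneg_left h1 (pow_nonneg (inv_nonneg.mpr (norm_nonneg _)) _)
      _ = C * (1 - r)⁻¹ * (t⁻¹) ^ (n + 1) := by
          rw [hr_def]
          rw [show (‖α‖⁻¹ : ℝ) ^ (n+1) * (C * (‖α‖ / t) ^ (n+1) * (1 - ‖α‖/t)⁻¹)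
            = C * (1 - ‖α‖/t)⁻¹ * (‖α‖⁻¹ * (‖α‖ / t)) ^ (n+1) by rw [mul_pow]; ring]
          congr 2
          field_simp
  -- final comparison with a geometric series
  set s : ℝ := ‖x‖ / t with hs_def
  have hs0 : 0 ≤ s := div_nonneg (norm_nonneg _) (le_of_lt htpos)
  have hs1 : s < 1 := (div_lt_one htpos).mpr hxt
  apply Summable.of_norm_bounded (g := fun n => C * (1 - r)⁻¹ * t⁻¹ * s ^ n)
    (((summable_geometric_of_lt_one hs0 hs1).mul_left _))
  intro n
  rw [norm_mul, norm_pow]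
  calc ‖x‖ ^ n * ‖b n‖
      ≤ ‖x‖ ^ n * (C * (1 - r)⁻¹ * (t⁻¹) ^ (n + 1)) := by
        exact mul_le_mul_of_nonneg_left (hbn n) (pow_nonneg (norm_nonneg _) _)
    _ = C * (1 - r)⁻¹ * t⁻¹ * s ^ n := by
        rw [hs_def, div_pow, pow_succ]
        field_simp
        rw [mul_assoc (‖x‖ ^ n * C), ← mul_pow, one_div_mul_cancel htpos.ne', one_pow, mul_one]
end
end

section
/- Let f be a slice regular function on B_R ⊂ ℍ (i.e., f(w) = Σᵢ wⁱaᵢ a convergent power series) and α ∈ B_R a non-real quaternion. Then there exist a unique slice regular function h on B_R and unique quaternions a, b such that f(w) = Δ_α(w)·h(w) + w·a + b, where Δ_α(w) = w² − w·tr(α) + |α|² is the (real) characteristic polynomial of α. -/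
noncomputable section

namespace Stmt4

open Finset Polynomial

/-- geometric-type sequence `Σ_{j<k} α^j (star α)^(k-1-j)` -/
def cs (α : Quat) (k : ℕ) : Quat := ∑ j ∈ Finset.range k, α ^ j * (star α) ^ (k - 1 - j)

@[simp] lemma cs_zero (α : Quat) : cs α 0 = 0 := by simp [cs]

@[simp] lemma cs_one (α : Quat) : cs α 1 = 1 := by simp [cs]

lemma cs_step (α : Quat) (k : ℕ) : cs α (k + 1) = α * cs α k + (star α) ^ k := by
  rw [cs, Finset.sum_range_succ']
  simp only [pow_zero, one_mul, Nat.sub_zero, Nat.add_sub_cancel]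
  rw [cs, Finset.mul_sum]
  congr 1
  refine Finset.sum_congr rfl fun j hj => ?_
  rw [← mul_assoc, ← pow_succ']
  congr 2
  omega

lemma cs_rec (α : Quat) (k : ℕ) :
    cs α (k + 2) = (2 * α.re : ℝ) * cs α (k + 1) - (‖α‖ ^ 2 : ℝ) * cs α k := by
  have hts : ((2 * α.re : ℝ) : Quat) = α + star α := (Quaternion.self_add_star' α).symm
  have hN : ((‖α‖ ^ 2 : ℝ) : Quat) = α * star α := by
    rw [Quaternion.self_mul_star]
    norm_cast
    rw [Quaternion.normSq_eq_norm_mul_self, sq]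
  have hcomm : star α * α = α * star α := star_comm_self' α
  rw [cs_step α (k + 1), cs_step α k, hts, hN]
  have h1 : star α * (α * cs α k) = α * star α * cs α k := by rw [← mul_assoc, hcomm]
  rw [add_mul, mul_add, mul_add (star α), h1, ← pow_succ']
  abel

/-- `cs` is real (fixed by star). -/
lemma star_cs (α : Quat) (k : ℕ) : star (cs α k) = cs α k := by
  simp only [cs, star_sum]
  rw [show (∑ j ∈ Finset.range k, star (α ^ j * (star α) ^ (k - 1 - j)))
      = ∑ j ∈ Finset.range k, α ^ (k - 1 - j) * (star α) ^ j from
    Finset.sum_congr rfl fun j hj => by rw [star_mul, star_pow, star_pow, star_star]]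
  rw [← Finset.sum_range_reflect]
  refine Finset.sum_congr rfl fun j hj => ?_
  rw [Finset.mem_range] at hj
  congr 2 <;> omega

lemma cs_eq_coe_re (α : Quat) (k : ℕ) : cs α k = ((cs α k).re : ℝ) := by
  exact Quaternion.star_eq_self.mp (star_cs α k)

lemma norm_cs_le (α : Quat) (k : ℕ) : ‖cs α (k + 1)‖ ≤ (k + 1) * ‖α‖ ^ k := by
  calc ‖cs α (k + 1)‖ ≤ ∑ j ∈ Finset.range (k + 1), ‖α ^ j * (star α) ^ (k - j)‖ := by
        rw [cs]
        refine (norm_sum_le _ _).trans_eq ?_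
        refine Finset.sum_congr rfl fun j hj => ?_
        congr 3 <;> omega
    _ ≤ ∑ j ∈ Finset.range (k + 1), ‖α‖ ^ k := by
        refine Finset.sum_le_sum fun j hj => ?_
        rw [Finset.mem_range] at hj
        rw [norm_mul, norm_pow, norm_pow, norm_star, ← pow_add]
        apply le_of_eq
        congr 1 <;> omega
    _ = (k + 1) * ‖α‖ ^ k := by
        rw [Finset.sum_const, Finset.card_range, nsmul_eq_mul]
        push_cast
        ring



def cr (α : Quat) : ℕ → ℝ
  | 0 => 0
  | 1 => 1
  | (k + 2) => 2 * α.re * cr α (k + 1) - ‖α‖ ^ 2 * cr α k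

def dr (α : Quat) (k : ℕ) : ℝ := if k = 0 then 1 else -‖α‖ ^ 2 * cr α (k - 1)

@[simp] lemma cr_zero (α : Quat) : cr α 0 = 0 := rfl
@[simp] lemma cr_one (α : Quat) : cr α 1 = 1 := rfl
lemma cr_rec (α : Quat) (k : ℕ) :
    cr α (k + 2) = 2 * α.re * cr α (k + 1) - ‖α‖ ^ 2 * cr α k := rfl
@[simp] lemma dr_zero (α : Quat) : dr α 0 = 1 := rfl
lemma dr_succ (α : Quat) (k : ℕ) : dr α (k + 1) = -‖α‖ ^ 2 * cr α k := rfl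

/-- `cr` coerces to `cs`. -/
lemma cr_coe (α : Quat) : ∀ k, ((cr α k : ℝ) : Quat) = cs α k := by
  have key : ∀ k, (((cr α k : ℝ) : Quat) = cs α k) ∧ (((cr α (k+1) : ℝ) : Quat) = cs α (k+1)) := by
    intro k
    induction k with
    | zero => simp
    | succ n ih =>
      refine ⟨ih.2, ?_⟩
      rw [cr_rec, cs_rec]
      push_cast
      rw [ih.1, ih.2]
  exact fun k => (key k).1

lemma abs_cr_le (α : Quat) (k : ℕ) : |cr α (k + 1)| ≤ (k + 1) * ‖α‖ ^ k := by
  have h := norm_cs_le α k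
  rwa [← cr_coe, Quaternion.norm_coe, Real.norm_eq_abs] at h

lemma abs_dr_le (α : Quat) (k : ℕ) : |dr α k| ≤ (k + 1) * ‖α‖ ^ k := by
  match k with
  | 0 => simp
  | 1 => simp [dr_succ]
  | (m + 2) =>
    rw [dr_succ, abs_mul, abs_neg, abs_of_nonneg (by positivity : (0:ℝ) ≤ ‖α‖ ^ 2)]
    have h := abs_cr_le α m
    calc ‖α‖ ^ 2 * |cr α (m + 1)| ≤ ‖α‖ ^ 2 * ((m + 1) * ‖α‖ ^ m) := by
          exact mul_le_mul_of_nonneg_left h (by positivity)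
      _ = (m + 1) * ‖α‖ ^ (m + 2) := by ring
      _ ≤ ((m + 2 : ℕ) + 1) * ‖α‖ ^ (m + 2) := by
          have hle : ((m : ℝ) + 1) ≤ ((m + 2 : ℕ) : ℝ) + 1 := by push_cast; linarith
          exact mul_le_mul_of_nonneg_right hle (by positivity)

def Dpoly (α : Quat) : Polynomial ℝ := X ^ 2 - C (2 * α.re) * X + C (‖α‖ ^ 2)

def Qpoly (α : Quat) : ℕ → Polynomial ℝ
  | 0 => 0
  | (k + 1) => X * Qpoly α k + C (cr α k)

lemma cr_succ' (α : Quat) (k : ℕ) : cr α (k + 1) = 2 * α.re * cr α k + dr α k := by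
  match k with
  | 0 => simp
  | (m + 1) => rw [cr_rec, dr_succ]; ring

lemma keyP (α : Quat) : ∀ k, (X : Polynomial ℝ) ^ k
    = Dpoly α * Qpoly α k + C (cr α k) * X + C (dr α k) := by
  intro k
  induction k with
  | zero => simp [Qpoly, Dpoly]
  | succ n ih =>
    rw [pow_succ, ih, show Qpoly α (n + 1) = X * Qpoly α n + C (cr α n) from rfl,
      cr_succ' α n, dr_succ]
    simp only [map_add, map_mul, map_neg, map_sub, map_pow, Dpoly]
    ring

/-- Quotient partial evaluation. -/
def Qp (α : Quat) (q : Quat) : ℕ → Quat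
  | 0 => 0
  | (k + 1) => q * Qp α q k + algebraMap ℝ Quat (cr α k)

lemma Qp_eval (α q : Quat) : ∀ k, Polynomial.aeval q (Qpoly α k) = Qp α q k := by
  intro k
  induction k with
  | zero => simp [Qpoly, Qp]
  | succ n ih => simp [Qpoly, Qp, map_add, map_mul, ih]

lemma D_eval (α q : Quat) : Polynomial.aeval q (Dpoly α) = Δev α q := by
  rw [Dpoly, map_add, map_sub, map_mul, map_pow, Polynomial.aeval_X, Polynomial.aeval_C,
    Polynomial.aeval_C]
  rw [Δev]
  congr 2
  rw [Quaternion.algebraMap_def, Quaternion.coe_commutes, Quaternion.self_add_star']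

lemma keyid (α q : Quat) (k : ℕ) :
    q ^ k = Δev α q * Qp α q k + algebraMap ℝ Quat (cr α k) * q + algebraMap ℝ Quat (dr α k) := by
  have h := congrArg (Polynomial.aeval q) (keyP α k)
  simpa only [map_add, map_mul, map_pow, Polynomial.aeval_X, Polynomial.aeval_C,
    Qp_eval, D_eval] using h

/-- antidiagonal formula for `Qp`. -/
lemma Qp_anti (α q : Quat) (n : ℕ) :
    ∑ p ∈ Finset.HasAntidiagonal.antidiagonal n, q ^ p.1 * algebraMap ℝ Quat (cr α (p.2 + 1))
      = Qp α q (n + 2) := by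
  rw [Finset.Nat.sum_antidiagonal_eq_sum_range_succ_mk]
  induction n with
  | zero => simp [Qp]
  | succ m ih =>
    rw [Finset.sum_range_succ']
    simp only [pow_zero, one_mul, Nat.sub_zero]
    have step : ∀ j : ℕ, j < m + 1 → (m + 1 - (j + 1) + 1) = (m - j + 1) := by omega
    rw [show Qp α q (m + 3) = q * Qp α q (m + 2) + algebraMap ℝ Quat (cr α (m + 2)) from rfl,
      ← ih, Finset.mul_sum]
    congr 1
    · refine Finset.sum_congr rfl fun j hj => ?_
      rw [Finset.mem_range] at hj
      rw [← mul_assoc, ← pow_succ']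
      congr 3 <;> omega
    all_goals (congr 2 <;> omega)

lemma summable_geom1 {y : ℝ} (h0 : 0 ≤ y) (h1 : y < 1) :
    Summable fun k : ℕ => ((k : ℝ) + 1) * y ^ k := by
  have h2 : Summable fun n : ℕ => (n : ℝ) ^ 1 * y ^ n :=
    summable_pow_mul_geometric_of_norm_lt_one 1 (by rwa [Real.norm_eq_abs, abs_of_nonneg h0])
  have h3 : Summable fun k : ℕ => y ^ k := summable_geometric_of_lt_one h0 h1
  refine (h2.add h3).congr fun k => ?_
  push_cast
  ring

lemma exists_bound {g : ℕ → Quat} {R : ℝ} (hg : ConvOn g R) {ρ : ℝ} (h0 : 0 ≤ ρ)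
    (hρ : ρ < R) : ∃ M : ℝ, 0 ≤ M ∧ ∀ m, ‖g m‖ * ρ ^ m ≤ M := by
  have hsum : Summable fun i => ((ρ : Quat)) ^ i * g i := by
    apply hg
    rw [Quaternion.norm_coe, Real.norm_eq_abs, abs_of_nonneg h0]
    exact hρ
  have htend : Filter.Tendsto (fun i => ‖g i‖ * ρ ^ i) Filter.atTop (nhds 0) := by
    have h1 := (hsum.tendsto_atTop_zero).norm
    simp only [norm_mul, norm_pow, Quaternion.norm_coe, Real.norm_eq_abs,
      abs_of_nonneg h0, norm_zero] at h1
    refine h1.congr fun i => ?_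
    ring
  obtain ⟨M, hM⟩ := htend.bddAbove_range
  refine ⟨max M 0, le_max_right _ _, fun m => ?_⟩
  exact le_trans (hM (Set.mem_range_self m)) (le_max_left _ _)

/-- Coefficients of the quotient. -/
def hcoef (α : Quat) (f : ℕ → Quat) (j : ℕ) : Quat :=
  ∑' i, algebraMap ℝ Quat (cr α (i + 1)) * f (j + i + 2)

/-- Linear coefficient of the remainder. -/
def acoef (α : Quat) (f : ℕ → Quat) : Quat := ∑' k, algebraMap ℝ Quat (cr α k) * f k

/-- Constant coefficient of the remainder. -/
def bcoef (α : Quat) (f : ℕ → Quat) : Quat := ∑' k, algebraMap ℝ Quat (dr α k) * f k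

lemma norm_alg (r : ℝ) : ‖algebraMap ℝ Quat r‖ = |r| := by
  rw [norm_algebraMap', Real.norm_eq_abs]

def Gfam (α : Quat) (f : ℕ → Quat) (q : Quat) : ℕ × ℕ → Quat :=
  fun p => q ^ p.1 * (algebraMap ℝ Quat (cr α (p.2 + 1)) * f (p.1 + p.2 + 2))

def Wfam (α : Quat) (f : ℕ → Quat) (q : Quat) : ℕ → Quat := fun k =>
  (q ^ k - algebraMap ℝ Quat (cr α k) * q - algebraMap ℝ Quat (dr α k)) * f k

set_option maxHeartbeats 1000000 in
lemma main_identity {f : ℕ → Quat} {R : ℝ} (hf : ConvOn f R) {α : Quat} (hα : ‖α‖ < R)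
    {q : Quat} (hq : ‖q‖ < R) :
    Summable (fun j => q ^ j * hcoef α f j) ∧
      pev f q = Δev α q * pev (hcoef α f) q + q * acoef α f + bcoef α f := by
  have hR : (0 : ℝ) < R := lt_of_le_of_lt (norm_nonneg q) hq
  have hmax : max ‖q‖ ‖α‖ < R := max_lt hq hα
  have hmax0 : 0 ≤ max ‖q‖ ‖α‖ := le_trans (norm_nonneg q) (le_max_left _ _)
  obtain ⟨ρ, hρ1, hρ2⟩ : ∃ ρ : ℝ, max ‖q‖ ‖α‖ < ρ ∧ ρ < R :=
    ⟨(max ‖q‖ ‖α‖ + R) / 2, by linarith, by linarith⟩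
  have hρ0 : (0 : ℝ) < ρ := lt_of_le_of_lt hmax0 hρ1
  have hqρ : ‖q‖ < ρ := lt_of_le_of_lt (le_max_left _ _) hρ1
  have hαρ : ‖α‖ < ρ := lt_of_le_of_lt (le_max_right _ _) hρ1
  have hq1 : ‖q‖ / ρ < 1 := by rw [div_lt_one hρ0]; exact hqρ
  have hα1 : ‖α‖ / ρ < 1 := by rw [div_lt_one hρ0]; exact hαρ
  obtain ⟨M, hM0, hM⟩ := exists_bound hf (le_of_lt hρ0) hρ2
  have hfb : ∀ m, ‖f m‖ ≤ M / ρ ^ m := fun m =>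
    (le_div_iff₀ (pow_pos hρ0 m)).mpr (hM m)
  -- the double-indexed family
  have hGbound : ∀ p : ℕ × ℕ,
      ‖Gfam α f q p‖ ≤ (‖q‖ / ρ) ^ p.1 * (((p.2 : ℝ) + 1) * (‖α‖ / ρ) ^ p.2 * (M / ρ ^ 2)) := by
    rintro ⟨j, i⟩
    calc ‖Gfam α f q (j, i)‖ = ‖q‖ ^ j * (|cr α (i + 1)| * ‖f (j + i + 2)‖) := by
          simp only [Gfam, norm_mul, norm_pow, norm_alg]
      _ ≤ ‖q‖ ^ j * ((((i : ℝ) + 1) * ‖α‖ ^ i) * (M / ρ ^ (j + i + 2))) := by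
          gcongr
          · exact abs_cr_le α i
          · exact hfb _
      _ = (‖q‖ / ρ) ^ j * (((i : ℝ) + 1) * (‖α‖ / ρ) ^ i * (M / ρ ^ 2)) := by
          rw [div_pow, div_pow, pow_add, pow_add]
          simp only [div_eq_mul_inv, mul_inv, inv_pow]
          ring
  have hbig : Summable fun p : ℕ × ℕ =>
      (‖q‖ / ρ) ^ p.1 * (((p.2 : ℝ) + 1) * (‖α‖ / ρ) ^ p.2 * (M / ρ ^ 2)) :=
    Summable.mul_of_nonneg (summable_geometric_of_lt_one (by positivity) hq1)
      ((summable_geom1 (by positivity) hα1).mul_right (M / ρ ^ 2))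
      (fun x => by positivity) (fun x => by positivity)
  have hGsum : Summable (Gfam α f q) :=
    Summable.of_norm (Summable.of_nonneg_of_le (fun _ => norm_nonneg _) hGbound hbig)
  have hinner : ∀ j, Summable fun i => algebraMap ℝ Quat (cr α (i + 1)) * f (j + i + 2) := by
    intro j
    apply Summable.of_norm
    apply Summable.of_nonneg_of_le (fun _ => norm_nonneg _)
      (f := fun i : ℕ => (((i : ℝ) + 1) * (‖α‖ / ρ) ^ i) * (M / ρ ^ (j + 2)))
    · intro i
      calc ‖algebraMap ℝ Quat (cr α (i + 1)) * f (j + i + 2)‖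
          = |cr α (i + 1)| * ‖f (j + i + 2)‖ := by rw [norm_mul, norm_alg]
        _ ≤ (((i : ℝ) + 1) * ‖α‖ ^ i) * (M / ρ ^ (j + i + 2)) := by
            gcongr
            · exact abs_cr_le α i
            · exact hfb _
        _ = (((i : ℝ) + 1) * (‖α‖ / ρ) ^ i) * (M / ρ ^ (j + 2)) := by
            rw [div_pow, pow_add, pow_add]
            simp only [div_eq_mul_inv, mul_inv, inv_pow]
            ring
    · exact (summable_geom1 (by positivity) hα1).mul_right _
  have hfib : ∀ j, HasSum (fun i => Gfam α f q (j, i)) (q ^ j * hcoef α f j) := by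
    intro j
    have h1 := (hinner j).hasSum.mul_left (q ^ j)
    simpa only [Gfam, hcoef] using h1
  have hmac : HasSum (fun j => q ^ j * hcoef α f j) (∑' p, Gfam α f q p) :=
    HasSum.prod_fiberwise hGsum.hasSum hfib
  refine ⟨hmac.summable, ?_⟩
  -- regroup along antidiagonals
  have hGs : HasSum ((Gfam α f q) ∘ (Finset.HasAntidiagonal.sigmaAntidiagonalEquivProd (A := ℕ))) (∑' p, Gfam α f q p) :=
    (Equiv.hasSum_iff _).2 hGsum.hasSum
  have hsigma : HasSum (fun n => ∑ p ∈ Finset.HasAntidiagonal.antidiagonal n, Gfam α f q p) (∑' p, Gfam α f q p) := by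
    refine hGs.sigma fun n => ?_
    have h2 : HasSum (fun c : Finset.HasAntidiagonal.antidiagonal n => Gfam α f q c)
        (∑ p ∈ Finset.HasAntidiagonal.antidiagonal n, Gfam α f q p) := by
      rw [← Finset.sum_coe_sort (Finset.HasAntidiagonal.antidiagonal n) (Gfam α f q)]
      exact hasSum_fintype _
    exact h2
  have hfiber_eq : ∀ n, ∑ p ∈ Finset.HasAntidiagonal.antidiagonal n, Gfam α f q p = Qp α q (n + 2) * f (n + 2) := by
    intro n
    rw [← Qp_anti α q n, Finset.sum_mul]
    refine Finset.sum_congr rfl fun p hp => ?_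
    rw [Finset.HasAntidiagonal.mem_antidiagonal] at hp
    simp only [Gfam]
    rw [mul_assoc]
    rw [show p.1 + p.2 + 2 = n + 2 from by omega]
  have hreg : HasSum (fun n => Qp α q (n + 2) * f (n + 2)) (∑' p, Gfam α f q p) := by
    simpa only [hfiber_eq] using hsigma
  -- individual summabilities
  have S1 : Summable fun k => q ^ k * f k := hf q hq
  have Sa : Summable fun k => algebraMap ℝ Quat (cr α k) * f k := by
    rw [← summable_nat_add_iff 1]
    apply Summable.of_norm
    apply Summable.of_nonneg_of_le (fun _ => norm_nonneg _)
      (f := fun k : ℕ => (((k : ℝ) + 1) * (‖α‖ / ρ) ^ k) * (M / ρ))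
    · intro k
      calc ‖algebraMap ℝ Quat (cr α (k + 1)) * f (k + 1)‖
          = |cr α (k + 1)| * ‖f (k + 1)‖ := by rw [norm_mul, norm_alg]
        _ ≤ (((k : ℝ) + 1) * ‖α‖ ^ k) * (M / ρ ^ (k + 1)) := by
            gcongr
            · exact abs_cr_le α k
            · exact hfb _
        _ = (((k : ℝ) + 1) * (‖α‖ / ρ) ^ k) * (M / ρ) := by
            rw [div_pow, pow_succ]
            simp only [div_eq_mul_inv, mul_inv, inv_pow]
            ring
    · exact (summable_geom1 (by positivity) hα1).mul_right _
  have S2 : Summable fun k => algebraMap ℝ Quat (cr α k) * q * f k := by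
    rw [← summable_nat_add_iff 1]
    apply Summable.of_norm
    apply Summable.of_nonneg_of_le (fun _ => norm_nonneg _)
      (f := fun k : ℕ => (((k : ℝ) + 1) * (‖α‖ / ρ) ^ k) * M)
    · intro k
      calc ‖algebraMap ℝ Quat (cr α (k + 1)) * q * f (k + 1)‖
          = |cr α (k + 1)| * ‖q‖ * ‖f (k + 1)‖ := by rw [norm_mul, norm_mul, norm_alg]
        _ ≤ (((k : ℝ) + 1) * ‖α‖ ^ k) * ρ * (M / ρ ^ (k + 1)) := by
            have h1 := abs_cr_le α k
            have h2 := hfb (k + 1)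
            have h3 := le_of_lt hqρ
            gcongr
        _ = (((k : ℝ) + 1) * (‖α‖ / ρ) ^ k) * M := by
            have hρne : ρ ≠ 0 := ne_of_gt hρ0
            rw [div_pow, pow_succ]
            field_simp
    · exact (summable_geom1 (by positivity) hα1).mul_right _
  have S3 : Summable fun k => algebraMap ℝ Quat (dr α k) * f k := by
    apply Summable.of_norm
    apply Summable.of_nonneg_of_le (fun _ => norm_nonneg _)
      (f := fun k : ℕ => (((k : ℝ) + 1) * (‖α‖ / ρ) ^ k) * M)
    · intro k
      calc ‖algebraMap ℝ Quat (dr α k) * f k‖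
          = |dr α k| * ‖f k‖ := by rw [norm_mul, norm_alg]
        _ ≤ (((k : ℝ) + 1) * ‖α‖ ^ k) * (M / ρ ^ k) := by
            gcongr
            · exact abs_dr_le α k
            · exact hfb _
        _ = (((k : ℝ) + 1) * (‖α‖ / ρ) ^ k) * M := by
            rw [div_pow]
            simp only [div_eq_mul_inv, mul_inv, inv_pow]
            ring
    · exact (summable_geom1 (by positivity) hα1).mul_right _
  -- main computation
  have hWexp : Wfam α f q = fun k => q ^ k * f k - algebraMap ℝ Quat (cr α k) * q * f k
      - algebraMap ℝ Quat (dr α k) * f k := by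
    funext k
    simp [Wfam, sub_mul]
  have hWsum : Summable (Wfam α f q) := by
    rw [hWexp]
    exact (S1.sub S2).sub S3
  have hWt : ∑' k, Wfam α f q k = pev f q - q * acoef α f - bcoef α f := by
    rw [hWexp, Summable.tsum_sub (S1.sub S2) S3, Summable.tsum_sub S1 S2]
    have h2 : ∑' k, algebraMap ℝ Quat (cr α k) * q * f k = q * acoef α f := by
      rw [acoef, ← Summable.tsum_mul_left q Sa]
      refine tsum_congr fun k => ?_
      rw [← mul_assoc, ← Algebra.commutes (cr α k) q]
    rw [h2]
    rfl
  have hW2 : ∀ k, Wfam α f q k = Δev α q * (Qp α q k * f k) := by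
    intro k
    rw [Wfam]
    have hk := keyid α q k
    have : q ^ k - algebraMap ℝ Quat (cr α k) * q - algebraMap ℝ Quat (dr α k)
        = Δev α q * Qp α q k := by rw [hk]; abel
    rw [this, mul_assoc]
  have hW0 : Wfam α f q 0 = 0 := by
    simp [Wfam]
  have hW1 : Wfam α f q 1 = 0 := by
    simp [Wfam, dr_succ]
  have hWt2 : ∑' k, Wfam α f q k = ∑' n, Wfam α f q (n + 2) := by
    rw [Summable.tsum_eq_zero_add hWsum, hW0, zero_add,
      Summable.tsum_eq_zero_add ((summable_nat_add_iff 1).2 hWsum), hW1, zero_add]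
  have hkey : Δev α q * pev (hcoef α f) q = pev f q - q * acoef α f - bcoef α f := by
    calc Δev α q * pev (hcoef α f) q = Δev α q * (∑' p, Gfam α f q p) := by rw [pev, hmac.tsum_eq]
      _ = Δev α q * ∑' n, Qp α q (n + 2) * f (n + 2) := by rw [hreg.tsum_eq]
      _ = ∑' n, Δev α q * (Qp α q (n + 2) * f (n + 2)) :=
          (Summable.tsum_mul_left _ hreg.summable).symm
      _ = ∑' n, Wfam α f q (n + 2) := tsum_congr fun n => (hW2 (n + 2)).symm
      _ = ∑' k, Wfam α f q k := hWt2.symm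
      _ = pev f q - q * acoef α f - bcoef α f := hWt
  rw [hkey]
  abel

lemma tail_split {u : ℕ → Quat} {x : ℝ} (hx : x ≠ 0)
    (hs : Summable fun i => ((x : Quat)) ^ i * u i) :
    ∀ m, (∀ i, i < m → u i = 0) →
      Summable (fun j => ((x : Quat)) ^ j * u (j + m)) ∧
        ∑' i, ((x : Quat)) ^ i * u i = (x : Quat) ^ m * ∑' j, ((x : Quat)) ^ j * u (j + m) := by
  have hxq : ((x : Quat)) ≠ 0 := by
    rw [ne_eq, ← Quaternion.coe_zero, Quaternion.coe_inj]
    exact hx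
  intro m
  induction m with
  | zero =>
    intro _
    refine ⟨by simpa using hs, by simp⟩
  | succ m IH =>
    intro hz
    obtain ⟨Sm, Em⟩ := IH fun i hi => hz i (Nat.lt_succ_of_lt hi)
    have hum : u m = 0 := hz m (Nat.lt_succ_self m)
    have h1 : Summable fun j => ((x : Quat)) ^ (j + 1) * u (j + 1 + m) :=
      (summable_nat_add_iff (f := fun i => ((x : Quat)) ^ i * u (i + m)) 1).2 Sm
    have S' : Summable fun j => ((x : Quat)) ^ j * u (j + (m + 1)) := by
      have h2 := h1.mul_left ((x : Quat))⁻¹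
      refine h2.congr fun j => ?_
      rw [← mul_assoc, pow_succ', ← mul_assoc, inv_mul_cancel₀ hxq, one_mul]
      rw [show j + 1 + m = j + (m + 1) from by omega]
    refine ⟨S', ?_⟩
    have e1 : ∑' j, ((x : Quat)) ^ j * u (j + m)
        = ∑' j, ((x : Quat)) ^ (j + 1) * u (j + 1 + m) := by
      rw [Summable.tsum_eq_zero_add Sm]
      simp [hum]
    have e2 : ∑' j, ((x : Quat)) ^ (j + 1) * u (j + 1 + m)
        = (x : Quat) * ∑' j, ((x : Quat)) ^ j * u (j + (m + 1)) := by
      rw [← Summable.tsum_mul_left _ S']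
      refine tsum_congr fun j => ?_
      rw [← mul_assoc, ← pow_succ']
      rw [show j + 1 + m = j + (m + 1) from by omega]
    rw [Em, e1, e2, ← mul_assoc, ← pow_succ]

lemma coeffs_eq_zero {u : ℕ → Quat} {R : ℝ} (hR : 0 < R) (hu : ConvOn u R)
    (hz : ∀ x : ℝ, 0 < x → x < R → pev u ((x : ℝ) : Quat) = 0) : ∀ m, u m = 0 := by
  intro m
  induction m using Nat.strong_induction_on with
  | _ m IH =>
  have hr0 : (0 : ℝ) < R / 2 := by linarith
  have hrR : R / 2 < R := by linarith
  obtain ⟨ρ, hρ1, hρ2⟩ : ∃ ρ : ℝ, R / 2 < ρ ∧ ρ < R := ⟨(R / 2 + R) / 2, by linarith, by linarith⟩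
  have hρ0 : (0 : ℝ) < ρ := lt_trans hr0 hρ1
  obtain ⟨M, hM0, hM⟩ := exists_bound hu (le_of_lt hρ0) hρ2
  have hfb : ∀ k, ‖u k‖ ≤ M / ρ ^ k := fun k => (le_div_iff₀ (pow_pos hρ0 k)).mpr (hM k)
  have SC : Summable fun j => ‖u (j + m + 1)‖ * (R / 2) ^ j := by
    apply Summable.of_nonneg_of_le (fun j => by positivity)
      (f := fun j : ℕ => (M / ρ ^ (m + 1)) * ((R / 2) / ρ) ^ j)
    · intro j
      calc ‖u (j + m + 1)‖ * (R / 2) ^ j ≤ M / ρ ^ (j + m + 1) * (R / 2) ^ j := by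
            have := hfb (j + m + 1)
            gcongr
        _ = (M / ρ ^ (m + 1)) * ((R / 2) / ρ) ^ j := by
            rw [div_pow, pow_add, pow_add]
            simp only [div_eq_mul_inv, mul_inv, inv_pow]
            ring_nf
            rw [one_div]
    · refine Summable.mul_left _ (summable_geometric_of_lt_one (by positivity) ?_)
      rw [div_lt_one hρ0]
      exact hρ1
  set C : ℝ := ∑' j, ‖u (j + m + 1)‖ * (R / 2) ^ j with hCdef
  have hC0 : 0 ≤ C := tsum_nonneg fun j => by positivity
  have key : ∀ x : ℝ, 0 < x → x ≤ R / 2 → ‖u m‖ ≤ x * C := by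
    intro x hx0 hxr
    have hxR : x < R := lt_of_le_of_lt hxr hrR
    have hxq : ((x : Quat)) ≠ 0 := by
      rw [ne_eq, ← Quaternion.coe_zero, Quaternion.coe_inj]
      exact ne_of_gt hx0
    have hnormx : ‖((x : Quat))‖ = x := by
      rw [Quaternion.norm_coe, Real.norm_eq_abs, abs_of_pos hx0]
    have hsx : Summable fun i => ((x : Quat)) ^ i * u i := hu _ (by rw [hnormx]; exact hxR)
    obtain ⟨Sx, Ex⟩ := tail_split (ne_of_gt hx0) hsx m fun i hi => IH i hi
    have hTz : ∑' j, ((x : Quat)) ^ j * u (j + m) = 0 := by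
      have h0 : (0 : Quat) = (x : Quat) ^ m * ∑' j, ((x : Quat)) ^ j * u (j + m) := by
        rw [← Ex, ← pev, hz x hx0 hxR]
      rcases mul_eq_zero.mp h0.symm with h | h
      · exact absurd h (pow_ne_zero m hxq)
      · exact h
    have hS1 : Summable fun j => ((x : Quat)) ^ (j + 1) * u (j + 1 + m) :=
      (summable_nat_add_iff (f := fun i => ((x : Quat)) ^ i * u (i + m)) 1).2 Sx
    have hum : u m = -∑' j, ((x : Quat)) ^ (j + 1) * u (j + 1 + m) := by
      have h3 := Summable.tsum_eq_zero_add Sx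
      rw [hTz] at h3
      simp only [pow_zero, one_mul, Nat.zero_add] at h3
      rw [eq_neg_iff_add_eq_zero]
      exact h3.symm
    have hbound : ∀ j, ‖((x : Quat)) ^ (j + 1) * u (j + 1 + m)‖
        ≤ x * (‖u (j + m + 1)‖ * (R / 2) ^ j) := by
      intro j
      rw [norm_mul, norm_pow, hnormx, show j + 1 + m = j + m + 1 from by omega]
      calc x ^ (j + 1) * ‖u (j + m + 1)‖ ≤ (x * (R / 2) ^ j) * ‖u (j + m + 1)‖ := by
            rw [pow_succ']
            have hxj : x ^ j ≤ (R / 2) ^ j := pow_le_pow_left₀ (le_of_lt hx0) hxr j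
            gcongr
        _ = x * (‖u (j + m + 1)‖ * (R / 2) ^ j) := by ring
    have hsn : Summable fun j => ‖((x : Quat)) ^ (j + 1) * u (j + 1 + m)‖ :=
      Summable.of_nonneg_of_le (fun j => norm_nonneg _) hbound (SC.mul_left x)
    calc ‖u m‖ = ‖∑' j, ((x : Quat)) ^ (j + 1) * u (j + 1 + m)‖ := by rw [hum, norm_neg]
      _ ≤ ∑' j, ‖((x : Quat)) ^ (j + 1) * u (j + 1 + m)‖ := norm_tsum_le_tsum_norm hsn
      _ ≤ ∑' j, x * (‖u (j + m + 1)‖ * (R / 2) ^ j) := Summable.tsum_le_tsum hbound hsn (SC.mul_left x)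
      _ = x * C := by rw [Summable.tsum_mul_left x SC]
  have hle : ‖u m‖ ≤ 0 := by
    refine le_of_forall_pos_le_add fun ε hε => ?_
    have hx0 : 0 < min (R / 2) (ε / (C + 1)) := lt_min hr0 (by positivity)
    have h1 : ‖u m‖ ≤ min (R / 2) (ε / (C + 1)) * C := key _ hx0 (min_le_left _ _)
    have h2 : min (R / 2) (ε / (C + 1)) * C ≤ (ε / (C + 1)) * C :=
      mul_le_mul_of_nonneg_right (min_le_right _ _) hC0
    have h3 : (ε / (C + 1)) * C ≤ ε := by
      rw [div_mul_eq_mul_div, div_le_iff₀ (by positivity)]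
      nlinarith
    linarith
  exact norm_le_zero_iff.mp hle

lemma algN (α : Quat) : algebraMap ℝ Quat (‖α‖ ^ 2) = α * star α := by
  rw [Quaternion.self_mul_star, Quaternion.algebraMap_def]
  norm_cast
  rw [Quaternion.normSq_eq_norm_mul_self, sq]

lemma algN' (α : Quat) : algebraMap ℝ Quat (‖α‖ ^ 2) = star α * α := by
  rw [algN, star_comm_self']

lemma delta_alpha_zero (α : Quat) : Δev α α = 0 := by
  rw [Δev, algN, mul_add, ← sq]
  abel

lemma delta_star_zero (α : Quat) : Δev α (star α) = 0 := by
  rw [Δev, algN', mul_add, ← sq]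
  abel

lemma delta_real_ne (α : Quat) (hnr : α.im ≠ 0) (x : ℝ) : Δev α ((x : ℝ) : Quat) ≠ 0 := by
  have him : α.imI ≠ 0 ∨ α.imJ ≠ 0 ∨ α.imK ≠ 0 := by
    by_contra h
    push_neg at h
    obtain ⟨h1, h2, h3⟩ := h
    apply hnr
    ext <;> simp [h1, h2, h3] <;> rfl
  have hval : Δev α ((x : ℝ) : Quat) = ((x ^ 2 - x * (2 * α.re) + ‖α‖ ^ 2 : ℝ) : Quat) := by
    rw [Δev, Quaternion.self_add_star', Quaternion.algebraMap_def]
    push_cast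
    ring
  have hpos : 0 < x ^ 2 - x * (2 * α.re) + ‖α‖ ^ 2 := by
    have hns : ‖α‖ ^ 2 = α.re ^ 2 + α.imI ^ 2 + α.imJ ^ 2 + α.imK ^ 2 := by
      rw [sq, ← Quaternion.normSq_eq_norm_mul_self]
      exact Quaternion.normSq_def' α
    rw [hns]
    rcases him with h | h | h
    · nlinarith [sq_nonneg (x - α.re), sq_nonneg α.imJ, sq_nonneg α.imK, sq_pos_of_ne_zero h]
    · nlinarith [sq_nonneg (x - α.re), sq_nonneg α.imI, sq_nonneg α.imK, sq_pos_of_ne_zero h]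
    · nlinarith [sq_nonneg (x - α.re), sq_nonneg α.imI, sq_nonneg α.imJ, sq_pos_of_ne_zero h]
  rw [hval]
  intro hcon
  rw [← Quaternion.coe_zero, Quaternion.coe_inj] at hcon
  exact (ne_of_gt hpos) hcon

lemma unique_rep {R : ℝ} (hR : 0 < R) {α : Quat} (hα : ‖α‖ < R) (hnr : α.im ≠ 0)
    {h₁ h₂ : ℕ → Quat} {a₁ a₂ b₁ b₂ : Quat} (hc1 : ConvOn h₁ R) (hc2 : ConvOn h₂ R)
    (heq : ∀ q : Quat, ‖q‖ < R →
      Δev α q * pev h₁ q + q * a₁ + b₁ = Δev α q * pev h₂ q + q * a₂ + b₂) :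
    h₁ = h₂ ∧ a₁ = a₂ ∧ b₁ = b₂ := by
  have hsα : ‖star α‖ < R := by rwa [norm_star]
  have E1 : α * a₁ + b₁ = α * a₂ + b₂ := by
    have := heq α hα
    rwa [delta_alpha_zero, zero_mul, zero_add, zero_mul, zero_add] at this
  have E2 : star α * a₁ + b₁ = star α * a₂ + b₂ := by
    have := heq (star α) hsα
    rwa [delta_star_zero, zero_mul, zero_add, zero_mul, zero_add] at this
  have e1 : α * (a₁ - a₂) = b₂ - b₁ := by
    rw [mul_sub, sub_eq_sub_iff_add_eq_add, E1]
    abel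
  have e2 : star α * (a₁ - a₂) = b₂ - b₁ := by
    rw [mul_sub, sub_eq_sub_iff_add_eq_add, E2]
    abel
  have e3 : (α - star α) * (a₁ - a₂) = 0 := by
    rw [sub_mul, e1, e2, sub_self]
  have hne : α - star α ≠ 0 := by
    rw [sub_ne_zero]
    intro h
    have h2 : α = (α.re : ℝ) := Quaternion.star_eq_self.mp h.symm
    apply hnr
    rw [h2]
    ext <;> simp
  have ha : a₁ = a₂ := by
    rcases mul_eq_zero.mp e3 with h | h
    · exact absurd h hne
    · exact sub_eq_zero.mp h
  have hb : b₁ = b₂ := by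
    rw [ha] at E1
    exact add_left_cancel E1
  refine ⟨?_, ha, hb⟩
  -- now the power series part
  have hu : ConvOn (fun i => h₁ i - h₂ i) R := by
    intro q hq
    exact ((hc1 q hq).sub (hc2 q hq)).congr fun i => by rw [mul_sub]
  have hz : ∀ x : ℝ, 0 < x → x < R → pev (fun i => h₁ i - h₂ i) ((x : ℝ) : Quat) = 0 := by
    intro x hx0 hxR
    have hnormx : ‖((x : Quat))‖ = x := by
      rw [Quaternion.norm_coe, Real.norm_eq_abs, abs_of_pos hx0]
    have hlt : ‖((x : Quat))‖ < R := by rw [hnormx]; exact hxR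
    have hpev : pev (fun i => h₁ i - h₂ i) ((x : ℝ) : Quat)
        = pev h₁ ((x : ℝ) : Quat) - pev h₂ ((x : ℝ) : Quat) := by
      rw [pev, pev, pev, ← Summable.tsum_sub (hc1 _ hlt) (hc2 _ hlt)]
      exact tsum_congr fun i => by rw [mul_sub]
    have hid := heq _ hlt
    rw [ha, hb] at hid
    have hmul : Δev α ((x : ℝ) : Quat) * (pev h₁ ((x : ℝ) : Quat) - pev h₂ ((x : ℝ) : Quat))
        = 0 := by
      rw [mul_sub]
      have : Δev α ((x : ℝ) : Quat) * pev h₁ ((x : ℝ) : Quat)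
          = Δev α ((x : ℝ) : Quat) * pev h₂ ((x : ℝ) : Quat) := by
        exact add_right_cancel (add_right_cancel hid)
      rw [this, sub_self]
    rcases mul_eq_zero.mp hmul with h | h
    · exact absurd h (delta_real_ne α hnr x)
    · rw [hpev]; exact h
  have := coeffs_eq_zero hR hu hz
  funext i
  have h6 := this i
  exact sub_eq_zero.mp h6
end Stmt4

/-- Division with remainder by the characteristic polynomial: for `f` slice regular on
`B_R` and `α ∈ B_R` non-real, there are a unique slice regular `h` on `B_R` and unique
quaternions `a, b` with `f(w) = Δ_α(w)·h(w) + w·a + b`. -/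
theorem stmt4 (f : ℕ → Quat) (R : ℝ) (hR : 0 < R) (hf : ConvOn f R)
    (α : Quat) (hα : ‖α‖ < R) (hnr : α.im ≠ 0) :
    ∃! t : (ℕ → Quat) × Quat × Quat, ConvOn t.1 R ∧
      ∀ q : Quat, ‖q‖ < R →
        pev f q = Δev α q * pev t.1 q + q * t.2.1 + t.2.2 := by
  refine ⟨(Stmt4.hcoef α f, Stmt4.acoef α f, Stmt4.bcoef α f),
    ⟨fun q hq => (Stmt4.main_identity hf hα hq).1,
     fun q hq => (Stmt4.main_identity hf hα hq).2⟩, ?_⟩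
  rintro ⟨h₂, a₂, b₂⟩ ⟨hc2, hid2⟩
  have hcv : ConvOn (Stmt4.hcoef α f) R := fun q hq => (Stmt4.main_identity hf hα hq).1
  have heq : ∀ q : Quat, ‖q‖ < R →
      Δev α q * pev h₂ q + q * a₂ + b₂
        = Δev α q * pev (Stmt4.hcoef α f) q + q * Stmt4.acoef α f + Stmt4.bcoef α f :=
    fun q hq => (hid2 q hq).symm.trans (Stmt4.main_identity hf hα hq).2
  obtain ⟨hh, ha, hb⟩ := Stmt4.unique_rep hR hα hnr hc2 hcv heq
  simp only [Prod.mk.injEq]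
  exact ⟨hh, ha, hb⟩
end
end

section
/- Let f be a slice regular function on B_R ⊂ ℍ, α ∈ B_R non-real, and write f(w) = Δ_α(w)·h(w) + w·a + b (the division with remainder by the characteristic polynomial Δ_α). Then: (i) the whole conjugacy sphere S_α is contained in the zero set of f if and only if a = 0 and b = 0; (ii) f has exactly one zero on S_α if and only if a ≠ 0 and −b·a⁻¹ ∈ S_α, and in that case the unique zero is −b·a⁻¹. -/
noncomputable section

lemma delta_zero (α x : Quat) (hx : x ∈ Sset α) : Δev α x = 0 := by
  obtain ⟨h1, h2⟩ := hx
  unfold Δev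
  rw [← h1, ← h2]
  have : (algebraMap ℝ Quat) (‖x‖^2) = x * star x := by
    rw [Quaternion.self_mul_star, sq, Quaternion.normSq_eq_norm_mul_self]
    rfl
  rw [this]
  noncomm_ring

lemma mem_self (α : Quat) : α ∈ Sset α := ⟨rfl, rfl⟩

lemma mem_star (α : Quat) : star α ∈ Sset α := by
  constructor
  · rw [star_star, add_comm]
  · simp

lemma star_ne (α : Quat) (hnr : α.im ≠ 0) : star α ≠ α := by
  intro h
  rw [Quaternion.star_eq_self] at h
  apply hnr
  rw [h]
  simp

/-- For `f` slice regular on `B_R` with `f(w) = Δ_α(w)·h(w) + w·a + b` (`α ∈ B_R`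
non-real): (i) `S_α ⊆ V(f)` iff `a = 0 ∧ b = 0`; (ii) `f` has exactly one zero on
`S_α` iff `a ≠ 0` and `-b·a⁻¹ ∈ S_α`, and then the unique zero is `-b·a⁻¹`. -/
theorem stmt5 (f h : ℕ → Quat) (a b : Quat) (R : ℝ) (hR : 0 < R)
    (hf : ConvOn f R) (hh : ConvOn h R)
    (α : Quat) (hα : ‖α‖ < R) (hnr : α.im ≠ 0)
    (hdiv : ∀ q : Quat, ‖q‖ < R → pev f q = Δev α q * pev h q + q * a + b) :
    ((∀ x ∈ Sset α, pev f x = 0) ↔ a = 0 ∧ b = 0) ∧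
    ((∃! x : Quat, x ∈ Sset α ∧ pev f x = 0) ↔ a ≠ 0 ∧ -b * a⁻¹ ∈ Sset α) ∧
    (a ≠ 0 → -b * a⁻¹ ∈ Sset α →
      ∀ x ∈ Sset α, (pev f x = 0 ↔ x = -b * a⁻¹)) := by

  have key : ∀ x ∈ Sset α, pev f x = x * a + b := by
    intro x hx
    have hxR : ‖x‖ < R := hx.2 ▸ hα
    rw [hdiv x hxR, delta_zero α x hx, zero_mul, zero_add]
  have hcand : a ≠ 0 → -b * a⁻¹ * a + b = 0 := by
    intro ha
    rw [mul_assoc, inv_mul_cancel₀ ha, mul_one, neg_add_cancel]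
  have hzero_iff : a ≠ 0 → ∀ x : Quat, x * a + b = 0 ↔ x = -b * a⁻¹ := by
    intro ha x
    constructor
    · intro hx
      have : x * a = -b := eq_neg_of_add_eq_zero_left hx
      calc x = x * a * a⁻¹ := by rw [mul_assoc, mul_inv_cancel₀ ha, mul_one]
        _ = -b * a⁻¹ := by rw [this]
    · intro hx; rw [hx]; exact hcand ha
  refine ⟨?_, ?_, ?_⟩
  · constructor
    · intro H
      have h1 : α * a + b = 0 := (key α (mem_self α)) ▸ H α (mem_self α)
      have h2 : star α * a + b = 0 := (key _ (mem_star α)) ▸ H _ (mem_star α)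
      have hd : (star α - α) * a = 0 := by
        rw [sub_mul, sub_eq_zero]
        rw [eq_neg_of_add_eq_zero_left h2, eq_neg_of_add_eq_zero_left h1]
      have ha : a = 0 := by
        rcases mul_eq_zero.mp hd with h | h
        · exact absurd (sub_eq_zero.mp h) (star_ne α hnr)
        · exact h
      refine ⟨ha, ?_⟩
      rw [ha, mul_zero, zero_add] at h1
      exact h1
    · rintro ⟨ha, hb⟩ x hx
      rw [key x hx, ha, hb, mul_zero, add_zero]
  · constructor
    · rintro ⟨x₀, ⟨hx₀S, hx₀z⟩, huniq⟩
      have ha : a ≠ 0 := by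
        intro ha
        have hb : b = 0 := by
          have := key x₀ hx₀S
          rw [hx₀z, ha, mul_zero, zero_add] at this
          exact this.symm
        have hz : ∀ x ∈ Sset α, pev f x = 0 := fun x hx => by
          rw [key x hx, ha, hb, mul_zero, add_zero]
        have e1 := huniq α ⟨mem_self α, hz α (mem_self α)⟩
        have e2 := huniq (star α) ⟨mem_star α, hz _ (mem_star α)⟩
        exact star_ne α hnr (e2.trans e1.symm)
      have hx0 : x₀ = -b * a⁻¹ := by
        have := key x₀ hx₀S
        rw [hx₀z] at this
        exact (hzero_iff ha x₀).mp this.symm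
      exact ⟨ha, hx0 ▸ hx₀S⟩
    · rintro ⟨ha, hmem⟩
      refine ⟨-b * a⁻¹, ⟨hmem, ?_⟩, ?_⟩
      · rw [key _ hmem]; exact hcand ha
      · rintro y ⟨hyS, hyz⟩
        have := key y hyS
        rw [hyz] at this
        exact (hzero_iff ha y).mp this.symm
  · intro ha hmem x hx
    rw [key x hx]
    exact hzero_iff ha x
end
end

section
/- For every slice regular function f on B_R ⊂ ℍ and every α ∈ B_R, exactly one of the following holds: S_α ∩ V(f) is empty, S_α ∩ V(f) is a single point, or S_α ⊆ V(f), where V(f) is the zero set of f and S_α is the conjugacy class of α. -/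
noncomputable section

/-- Auxiliary recursion: coefficients `(P n, Q n)` such that `z ^ n = P n • z + Q n`
for any `z` with trace `t` and squared norm `s`. -/
def PQ (t s : ℝ) : ℕ → ℝ × ℝ
  | 0 => (0, 1)
  | n + 1 => (t * (PQ t s n).1 + (PQ t s n).2, -s * (PQ t s n).1)

lemma sq_eq (t s : ℝ) (z : Quat) (ht : z + star z = algebraMap ℝ Quat t)
    (hs : ‖z‖ ^ 2 = s) : z ^ 2 = algebraMap ℝ Quat t * z - algebraMap ℝ Quat s := by
  have h1 : star z * z = algebraMap ℝ Quat (Quaternion.normSq z) := by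
    rw [Quaternion.star_mul_self]; rfl
  have h2 : (Quaternion.normSq z : ℝ) = s := by
    rw [← hs, Quaternion.normSq_eq_norm_mul_self, sq]
  have hstar : star z = algebraMap ℝ Quat t - z := by rw [← ht, add_sub_cancel_left]
  rw [hstar, h2] at h1
  rw [sq, ← h1]
  noncomm_ring

lemma pow_eq (t s : ℝ) (z : Quat) (ht : z + star z = algebraMap ℝ Quat t)
    (hs : ‖z‖ ^ 2 = s) (n : ℕ) :
    z ^ n = algebraMap ℝ Quat (PQ t s n).1 * z + algebraMap ℝ Quat (PQ t s n).2 := by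
  induction n with
  | zero => simp [PQ]
  | succ n ih =>
    have hz2 := sq_eq t s z ht hs
    rw [pow_succ, ih, add_mul, mul_assoc, ← sq, hz2, PQ]
    ext <;> simp [Quaternion.re_mul, Quaternion.imI_mul, Quaternion.imJ_mul,
      Quaternion.imK_mul] <;> ring

theorem sub_singleton (S : Set Quat) (p : Quat) (h : S ⊆ {p}) :
    S = ∅ ∨ ∃ x : Quat, S = {x} := by
  rcases S.eq_empty_or_nonempty with h0 | h0
  · exact Or.inl h0
  · exact Or.inr ⟨p, (Set.Nonempty.subset_singleton_iff h0).mp h⟩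

set_option maxHeartbeats 2000000 in
/-- For a slice regular `f` on `B_R` and `α ∈ B_R`, the intersection of the conjugacy
class `S_α` with the zero set `V(f)` is empty, a single point, or all of `S_α`. -/
theorem stmt6 (f : ℕ → Quat) (R : ℝ) (hR : 0 < R) (hf : ConvOn f R)
    (α : Quat) (hα : ‖α‖ < R) :
    Sset α ∩ Vset f R = ∅ ∨ (∃ x : Quat, Sset α ∩ Vset f R = {x}) ∨
      Sset α ⊆ Vset f R := by
  classical
  set C := algebraMap ℝ Quat with hC
  set t : ℝ := 2 * α.re with htdef
  set s : ℝ := ‖α‖ ^ 2 with hsdef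
  have hαtr : α + star α = C t := Quaternion.self_add_star' α
  -- facts about members of `Sset α`
  have hmem : ∀ z ∈ Sset α, z + star z = C t ∧ ‖z‖ ^ 2 = s ∧ ‖z‖ < R := by
    intro z hz
    obtain ⟨h1, h2⟩ := hz
    exact ⟨by rw [h1, hαtr], by rw [h2], by rw [h2]; exact hα⟩
  by_cases him : α.im = 0
  · -- α is real: S_α = {α}
    have hsub : Sset α ⊆ {α} := by
      intro z hz
      obtain ⟨h1, h2⟩ := hz
      have hre : z.re = α.re := by
        have h := congrArg QuaternionAlgebra.re h1
        simp [Quaternion.self_add_star, two_mul] at h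
        linarith
      have hns : Quaternion.normSq z = Quaternion.normSq α := by
        rw [Quaternion.normSq_eq_norm_mul_self, Quaternion.normSq_eq_norm_mul_self, h2]
      have hI0 : α.imI = 0 := by have := congrArg QuaternionAlgebra.imI him; simpa [Quaternion.imI_zero] using this
      have hJ0 : α.imJ = 0 := by have := congrArg QuaternionAlgebra.imJ him; simpa [Quaternion.imJ_zero] using this
      have hK0 : α.imK = 0 := by have := congrArg QuaternionAlgebra.imK him; simpa [Quaternion.imK_zero] using this
      rw [Quaternion.normSq_def', Quaternion.normSq_def', hre, hI0, hJ0, hK0] at hns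
      have hsum : z.imI ^ 2 + z.imJ ^ 2 + z.imK ^ 2 = 0 := by nlinarith
      have hI : z.imI = 0 := by nlinarith [sq_nonneg z.imI, sq_nonneg z.imJ, sq_nonneg z.imK]
      have hJ : z.imJ = 0 := by nlinarith [sq_nonneg z.imI, sq_nonneg z.imJ, sq_nonneg z.imK]
      have hK : z.imK = 0 := by nlinarith [sq_nonneg z.imI, sq_nonneg z.imJ, sq_nonneg z.imK]
      show z = α
      ext <;> simp [hre, hI, hJ, hK, hI0, hJ0, hK0]
    rcases sub_singleton (Sset α ∩ Vset f R) α (fun z hz => hsub hz.1) with h | h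
    · exact Or.inl h
    · exact Or.inr (Or.inl h)
  · -- α is not real: use two distinct points of S_α
    set r : ℝ := ‖α.im‖ with hrdef
    have hr : r ≠ 0 := by simpa [hrdef] using him
    set x : Quat := ⟨α.re, r, 0, 0⟩ with hxdef
    set y : Quat := ⟨α.re, 0, r, 0⟩ with hydef
    have hnormim : α.im.re ^ 2 + α.im.imI ^ 2 + α.im.imJ ^ 2 + α.im.imK ^ 2 = r ^ 2 := by
      have : Quaternion.normSq α.im = ‖α.im‖ * ‖α.im‖ :=
        Quaternion.normSq_eq_norm_mul_self _
      rw [Quaternion.normSq_def'] at this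
      rw [hrdef]; nlinarith [this]
    have hnormim' : α.imI ^ 2 + α.imJ ^ 2 + α.imK ^ 2 = r ^ 2 := by
      have h := hnormim
      rw [Quaternion.re_im, Quaternion.imI_im, Quaternion.imJ_im, Quaternion.imK_im] at h
      simpa using h
    have hnsx : Quaternion.normSq x = Quaternion.normSq α := by
      have hx1 : Quaternion.normSq x = α.re ^ 2 + r ^ 2 := by
        rw [Quaternion.normSq_def', hxdef]
        norm_num
      rw [hx1, Quaternion.normSq_def']
      linarith
    have hnsy : Quaternion.normSq y = Quaternion.normSq α := by
      have hy1 : Quaternion.normSq y = α.re ^ 2 + r ^ 2 := by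
        rw [Quaternion.normSq_def', hydef]
        norm_num
      rw [hy1, Quaternion.normSq_def']
      linarith
    have hnorm_of_ns : ∀ z : Quat, Quaternion.normSq z = Quaternion.normSq α → ‖z‖ = ‖α‖ := by
      intro z h
      have h1 : ‖z‖ * ‖z‖ = ‖α‖ * ‖α‖ := by
        rw [← Quaternion.normSq_eq_norm_mul_self, ← Quaternion.normSq_eq_norm_mul_self, h]
      rw [← Real.sqrt_mul_self (norm_nonneg z), h1, Real.sqrt_mul_self (norm_nonneg α)]
    have hxS : x ∈ Sset α := by
      refine ⟨?_, hnorm_of_ns x hnsx⟩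
      rw [hαtr, Quaternion.self_add_star']
      congr 1
    have hyS : y ∈ Sset α := by
      refine ⟨?_, hnorm_of_ns y hnsy⟩
      rw [hαtr, Quaternion.self_add_star']
      congr 1
    have hxy : x - y ≠ 0 := by
      intro h
      have := congrArg QuaternionAlgebra.imI h
      simp [hxdef, hydef, Quaternion.imI_sub, Quaternion.imI_zero] at this
      exact hr (by simpa using (show r - 0 = 0 from this))
    -- summability of the P and Q coefficient series
    obtain ⟨hxt, hxs, hxR⟩ := hmem x hxS
    obtain ⟨hyt, hys, hyR⟩ := hmem y hyS
    have hsumx : Summable fun n => x ^ n * f n := hf x hxR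
    have hsumy : Summable fun n => y ^ n * f n := hf y hyR
    have hkey : ∀ n : ℕ, (x ^ n - y ^ n) * f n = (x - y) * (C (PQ t s n).1 * f n) := by
      intro n
      rw [pow_eq t s x hxt hxs n, pow_eq t s y hyt hys n]
      have hc : C (PQ t s n).1 * (x - y) = (x - y) * C (PQ t s n).1 :=
        (Algebra.commutes _ _)
      calc (C (PQ t s n).1 * x + C (PQ t s n).2 - (C (PQ t s n).1 * y + C (PQ t s n).2)) * f n
          = (C (PQ t s n).1 * (x - y)) * f n := by noncomm_ring
        _ = (x - y) * (C (PQ t s n).1 * f n) := by rw [hc, mul_assoc]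
    have hsumP : Summable fun n => C (PQ t s n).1 * f n := by
      have h1 : Summable fun n => (x ^ n - y ^ n) * f n := by
        have := hsumx.sub hsumy
        simpa [sub_mul] using this
      have h2 : Summable fun n => (x - y) * (C (PQ t s n).1 * f n) := by
        simpa [hkey] using h1
      have h3 := h2.mul_left (x - y)⁻¹
      have : (fun n => (x - y)⁻¹ * ((x - y) * (C (PQ t s n).1 * f n)))
          = fun n => C (PQ t s n).1 * f n := by
        funext n
        rw [← mul_assoc, inv_mul_cancel₀ hxy, one_mul]
      rwa [this] at h3
    have hsumQ : Summable fun n => C (PQ t s n).2 * f n := by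
      have h1 : Summable fun n => x ^ n * f n - x * (C (PQ t s n).1 * f n) :=
        hsumx.sub (hsumP.mul_left x)
      have : (fun n => x ^ n * f n - x * (C (PQ t s n).1 * f n))
          = fun n => C (PQ t s n).2 * f n := by
        funext n
        rw [pow_eq t s x hxt hxs n]
        have hc : C (PQ t s n).1 * x = x * C (PQ t s n).1 := (Algebra.commutes _ _)
        rw [add_mul, hc, mul_assoc]
        abel
      rwa [this] at h1
    set b : Quat := ∑' n, C (PQ t s n).1 * f n with hbdef
    set c : Quat := ∑' n, C (PQ t s n).2 * f n with hcdef
    -- evaluation formula on the conjugacy class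
    have heval : ∀ z ∈ Sset α, pev f z = z * b + c := by
      intro z hz
      obtain ⟨hzt, hzs, _⟩ := hmem z hz
      have hterm : ∀ n : ℕ, z ^ n * f n
          = z * (C (PQ t s n).1 * f n) + C (PQ t s n).2 * f n := by
        intro n
        rw [pow_eq t s z hzt hzs n]
        have hc : C (PQ t s n).1 * z = z * C (PQ t s n).1 := (Algebra.commutes _ _)
        rw [add_mul, hc, mul_assoc]
      rw [pev]
      calc (∑' n, z ^ n * f n)
          = ∑' n, (z * (C (PQ t s n).1 * f n) + C (PQ t s n).2 * f n) := by
            exact tsum_congr hterm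
        _ = (∑' n, z * (C (PQ t s n).1 * f n)) + ∑' n, C (PQ t s n).2 * f n :=
            Summable.tsum_add (hsumP.mul_left z) hsumQ
        _ = z * b + c := by rw [hbdef, ← tsum_mul_left]
    by_cases hb : b = 0
    · by_cases hc : c = 0
      · -- S_α ⊆ V(f)
        refine Or.inr (Or.inr ?_)
        intro z hz
        obtain ⟨_, _, hzR⟩ := hmem z hz
        exact ⟨hzR, by rw [heval z hz, hb, hc, mul_zero, add_zero]⟩
      · -- empty
        left
        rw [Set.eq_empty_iff_forall_notMem]
        rintro z ⟨hzS, _, hz0⟩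
        rw [heval z hzS, hb, mul_zero, zero_add] at hz0
        exact hc hz0
    · -- at most one point
      have hsub : Sset α ∩ Vset f R ⊆ {-c * b⁻¹} := by
        rintro z ⟨hzS, _, hz0⟩
        rw [heval z hzS] at hz0
        have : z * b = -c := eq_neg_of_add_eq_zero_left hz0
        have : z = -c * b⁻¹ := by
          rw [← this, mul_assoc, mul_inv_cancel₀ hb, mul_one]
        exact this
      rcases sub_singleton (Sset α ∩ Vset f R) (-c * b⁻¹) hsub with h | h
      · exact Or.inl h
      · exact Or.inr (Or.inl h)
end
end

section
/- If f is a slice regular function on B_R ⊂ ℍ with all coefficients real (f = conj(f) coefficientwise), then f has no isolated non-real zeros: for every non-real α ∈ B_R, if f(α) = 0 then f vanishes on the entire conjugacy sphere S_α. Consequently V(f) is a union of conjugacy classes. -/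
noncomputable section

namespace Stmt7Aux

open Quaternion

lemma J_sq (x : Quat) (hx : x.im ≠ 0) :
    (‖x.im‖⁻¹ • x.im) * (‖x.im‖⁻¹ • x.im) = -1 := by
  have hv : ‖x.im‖ ≠ 0 := norm_ne_zero_iff.mpr hx
  have h1 : x.im * x.im = (((-(‖x.im‖ * ‖x.im‖)) : ℝ) : Quat) := by
    have h := Quaternion.im_sq x
    rw [sq] at h
    rw [h, ← Quaternion.normSq_eq_norm_mul_self]
    simp
  rw [smul_mul_assoc, mul_smul_comm, h1, smul_smul, Quaternion.smul_coe]
  rw [show ‖x.im‖⁻¹ * ‖x.im‖⁻¹ * -(‖x.im‖ * ‖x.im‖) = -1 by field_simp]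
  simp

/-- The complex slice coordinate of `x`. -/
def zc (x : Quat) : ℂ := (x.re : ℂ) + (‖x.im‖ : ℝ) * Complex.I

@[simp] lemma zc_re (x : Quat) : (zc x).re = x.re := by simp [zc]
@[simp] lemma zc_im (x : Quat) : (zc x).im = ‖x.im‖ := by simp [zc]

/-- The slice embedding `ℂ →ₐ[ℝ] ℍ` determined by `x`. -/
def φ (x : Quat) (hx : x.im ≠ 0) : ℂ →ₐ[ℝ] Quat :=
  Complex.liftAux (‖x.im‖⁻¹ • x.im) (J_sq x hx)

lemma φ_apply (x : Quat) (hx : x.im ≠ 0) (z : ℂ) :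
    φ x hx z = (z.re : Quat) + z.im • (‖x.im‖⁻¹ • x.im) := by
  simp [φ, Complex.liftAux_apply]

lemma φ_zc (x : Quat) (hx : x.im ≠ 0) : φ x hx (zc x) = x := by
  have hv : ‖x.im‖ ≠ 0 := norm_ne_zero_iff.mpr hx
  rw [φ_apply, zc_re, zc_im, smul_smul, mul_inv_cancel₀ hv, one_smul, Quaternion.re_add_im]

lemma φ_ofReal (x : Quat) (hx : x.im ≠ 0) (r : ℝ) : φ x hx (r : ℂ) = (r : Quat) := by
  rw [φ_apply]
  simp

lemma φ_injective (x : Quat) (hx : x.im ≠ 0) : Function.Injective (φ x hx) :=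
  (φ x hx).toRingHom.injective

lemma φ_continuous (x : Quat) (hx : x.im ≠ 0) : Continuous (φ x hx) :=
  (φ x hx).toLinearMap.continuous_of_finiteDimensional

lemma norm_sq_decomp (x : Quat) : ‖x‖ ^ 2 = x.re ^ 2 + ‖x.im‖ ^ 2 := by
  have h1 : ‖x‖ ^ 2 = Quaternion.normSq x := by
    rw [Quaternion.normSq_eq_norm_mul_self, sq]
  have h2 : ‖x.im‖ ^ 2 = Quaternion.normSq x.im := by
    rw [Quaternion.normSq_eq_norm_mul_self, sq]
  rw [h1, h2, Quaternion.normSq_def', Quaternion.normSq_def']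
  simp [Quaternion.im, QuaternionAlgebra.im]
  ring

lemma norm_zc (x : Quat) : ‖zc x‖ = ‖x‖ := by
  have h : ‖zc x‖ ^ 2 = ‖x‖ ^ 2 := by
    rw [Complex.sq_norm, Complex.normSq_apply, zc_re, zc_im, norm_sq_decomp]
    ring
  calc ‖zc x‖ = Real.sqrt (‖zc x‖ ^ 2) :=
        (Real.sqrt_sq (norm_nonneg _)).symm
    _ = Real.sqrt (‖x‖ ^ 2) := by rw [h]
    _ = ‖x‖ := Real.sqrt_sq (norm_nonneg _)

lemma coefficient_real (f : ℕ → Quat) (hreal : ∀ i, (f i).im = 0) (i : ℕ) :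
    f i = ((f i).re : Quat) := by
  conv_lhs => rw [← Quaternion.re_add_im (f i), hreal i]
  simp

/-- The complex series associated to a real-coefficient quaternionic series. -/
def cser (f : ℕ → Quat) (z : ℂ) : ℂ := ∑' i, z ^ i * ((f i).re : ℂ)

lemma summable_cser (f : ℕ → Quat) (hreal : ∀ i, (f i).im = 0) (x : Quat)
    (hs : Summable fun i => x ^ i * f i) :
    Summable fun i => (zc x) ^ i * ((f i).re : ℂ) := by
  have hnorm : Summable fun i => ‖x ^ i * f i‖ := hs.norm
  apply Summable.of_norm
  convert hnorm using 2 with i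
  rw [norm_mul, norm_mul, norm_pow, norm_pow,
    Complex.norm_real, norm_zc]
  congr 1
  rw [coefficient_real f hreal i, Quaternion.norm_coe, Real.norm_eq_abs]
  simp

lemma pev_eq (f : ℕ → Quat) (hreal : ∀ i, (f i).im = 0) (x : Quat) (hx : x.im ≠ 0)
    (hs : Summable fun i => x ^ i * f i) :
    pev f x = φ x hx (cser f (zc x)) := by
  have hsum := summable_cser f hreal x hs
  have hterm : ∀ i, φ x hx ((zc x) ^ i * ((f i).re : ℂ)) = x ^ i * f i := by
    intro i
    rw [map_mul, map_pow, φ_zc, φ_ofReal, ← coefficient_real f hreal i]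
  have := (hsum.hasSum.map (φ x hx).toAddMonoidHom (φ_continuous x hx)).tsum_eq
  rw [pev, cser]
  refine (tsum_congr fun i => (hterm i).symm).trans ?_
  simpa using this

lemma re_eq_of_trace (x α : Quat) (h : x + star x = α + star α) : x.re = α.re := by
  rw [Quaternion.self_add_star', Quaternion.self_add_star'] at h
  have := Quaternion.coe_injective h
  linarith

lemma norm_im_eq (x α : Quat) (htr : x + star x = α + star α) (hn : ‖x‖ = ‖α‖) :
    ‖x.im‖ = ‖α.im‖ := by
  have hre := re_eq_of_trace x α htr
  have h1 := norm_sq_decomp x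
  have h2 := norm_sq_decomp α
  have hsq : ‖x.im‖ ^ 2 = ‖α.im‖ ^ 2 := by rw [hn, hre] at h1; linarith
  calc ‖x.im‖ = Real.sqrt (‖x.im‖ ^ 2) := (Real.sqrt_sq (norm_nonneg _)).symm
    _ = Real.sqrt (‖α.im‖ ^ 2) := by rw [hsq]
    _ = ‖α.im‖ := Real.sqrt_sq (norm_nonneg _)

lemma zc_eq (x α : Quat) (htr : x + star x = α + star α) (hn : ‖x‖ = ‖α‖) :
    zc x = zc α := by
  rw [zc, zc, re_eq_of_trace x α htr, norm_im_eq x α htr hn]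

end Stmt7Aux

open Stmt7Aux in
/-- A slice regular function with real coefficients has no isolated non-real zeros:
every non-real zero is spherical, and hence the zero set is a union of conjugacy
classes. -/
theorem stmt7 (f : ℕ → Quat) (R : ℝ) (hR : 0 < R) (hf : ConvOn f R)
    (hreal : ∀ i, (f i).im = 0) :
    (∀ α : Quat, ‖α‖ < R → α.im ≠ 0 → pev f α = 0 →
      ∀ x ∈ Sset α, pev f x = 0) ∧
    Vset f R = ⋃ α ∈ Vset f R, Sset α := by
  have key : ∀ α : Quat, ‖α‖ < R → α.im ≠ 0 → pev f α = 0 →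
      ∀ x ∈ Sset α, pev f x = 0 := by
    intro α hα him h0 x hx
    obtain ⟨htr, hn⟩ := hx
    have hxR : ‖x‖ < R := hn ▸ hα
    have hxim : x.im ≠ 0 := by
      intro h
      apply him
      have := norm_im_eq x α htr hn
      rw [h, norm_zero] at this
      exact norm_eq_zero.mp this.symm
    have hα0 : φ α him (cser f (zc α)) = 0 := by
      rw [← pev_eq f hreal α him (hf α hα)]; exact h0
    have hS : cser f (zc α) = 0 := by
      apply φ_injective α him
      rw [hα0, map_zero]
    rw [pev_eq f hreal x hxim (hf x hxR), zc_eq x α htr hn, hS, map_zero]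
  refine ⟨key, ?_⟩
  ext q
  simp only [Set.mem_iUnion]
  constructor
  · intro hq
    exact ⟨q, hq, rfl, rfl⟩
  · rintro ⟨α, hα, htr, hn⟩
    have hqR : ‖q‖ < R := hn ▸ hα.1
    by_cases him : α.im = 0
    · -- α is real, hence Sset α = {α}
      have hre : q.re = α.re := re_eq_of_trace q α htr
      have hqim : ‖q.im‖ = ‖α.im‖ := norm_im_eq q α htr hn
      rw [him, norm_zero, norm_eq_zero] at hqim
      have : q = α := by
        conv_lhs => rw [← Quaternion.re_add_im q, hqim, hre]
        conv_rhs => rw [← Quaternion.re_add_im α, him]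
      exact ⟨hqR, this ▸ hα.2⟩
    · exact ⟨hqR, key α hα.1 him hα.2 q ⟨htr, hn⟩⟩
end
end

section
/- Let f(w) = g(w) + a₀ be a slice regular function on B_R ⊂ ℍ, where g has all real coefficients and a₀ ∈ ℍ is non-real. Then every zero of f lies in the complex plane ℂ_I spanned by 1 and Im(a₀)/|Im(a₀)|, and f has no spherical zeros (it never vanishes on an entire conjugacy sphere S_α with α non-real). -/
noncomputable section

/-- Powers of `q` lie in the real span of `1` and `q`. -/
lemma pow_mem_span (q : Quat) : ∀ n, q ^ n ∈ Submodule.span ℝ ({1, q} : Set Quat) := by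
  intro n
  induction n with
  | zero => simpa using Submodule.subset_span (by simp : (1:Quat) ∈ ({1,q} : Set Quat))
  | succ n ih =>
    rw [Submodule.mem_span_pair] at ih ⊢
    obtain ⟨c, d, h⟩ := ih
    refine ⟨-(d * Quaternion.normSq q), c + d * (2 * q.re), ?_⟩
    have hq2 : q * q = (2 * q.re) • q - ((Quaternion.normSq q : ℝ) : Quat) := by
      have h1 : q + star q = ((2 * q.re : ℝ) : Quat) := Quaternion.self_add_star' q
      have h2 : q * star q = ((Quaternion.normSq q : ℝ) : Quat) := Quaternion.self_mul_star q
      have : q * (q + star q) = q * ((2 * q.re : ℝ) : Quat) := by rw [h1]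
      rw [mul_add, h2, Quaternion.mul_coe_eq_smul] at this
      exact eq_sub_of_add_eq this
    rw [pow_succ, ← h, add_mul, smul_mul_assoc, smul_mul_assoc, one_mul, hq2]
    have hcoe : ((Quaternion.normSq q : ℝ) : Quat) = (Quaternion.normSq q : ℝ) • (1 : Quat) := by
      rw [← Quaternion.coe_one, Quaternion.smul_coe, mul_one]
    rw [hcoe]
    module

/-- A quaternion with vanishing imaginary part is (the coercion of) its real part. -/
lemma real_coe (a : Quat) (h : a.im = 0) : a = ((a.re : ℝ) : Quat) := by
  conv_lhs => rw [← Quaternion.re_add_im a]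
  rw [h, add_zero]

lemma pev_split (f : ℕ → Quat) (q : Quat) (hs : Summable fun i => q ^ i * f i) :
    pev f q = f 0 + ∑' i, q ^ (i + 1) * f (i + 1) := by
  rw [pev, Summable.tsum_eq_zero_add hs, pow_zero, one_mul]

/-- The tail of the series lies in the real span of `1` and `q`. -/
lemma tail_mem_span (f : ℕ → Quat) (q : Quat) (hs : Summable fun i => q ^ i * f i)
    (hreal : ∀ i, 1 ≤ i → (f i).im = 0) :
    (∑' i, q ^ (i + 1) * f (i + 1)) ∈ Submodule.span ℝ ({1, q} : Set Quat) := by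
  have hs' : Summable fun i => q ^ (i + 1) * f (i + 1) := by
    have := (summable_nat_add_iff (f := fun i => q ^ i * f i) 1).2 hs
    exact this
  have hterm : ∀ i, q ^ (i + 1) * f (i + 1) ∈ Submodule.span ℝ ({1, q} : Set Quat) := by
    intro i
    rw [real_coe (f (i+1)) (hreal (i+1) (by omega)), Quaternion.mul_coe_eq_smul]
    exact Submodule.smul_mem _ _ (pow_mem_span q (i + 1))
  have hcl : IsClosed (Submodule.span ℝ ({1, q} : Set Quat) : Set Quat) :=
    Submodule.closed_of_finiteDimensional _
  exact hcl.mem_of_tendsto hs'.hasSum.tendsto_sum_nat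
    (Filter.Eventually.of_forall fun s => Submodule.sum_mem _ fun i _ => hterm i)

/-- Relation between `pev f (star α)` and `star (pev f α)` when the higher coefficients
are real. -/
lemma pev_star (f : ℕ → Quat) (α : Quat) (hs : Summable fun i => α ^ i * f i)
    (hs' : Summable fun i => (star α) ^ i * f i) (hreal : ∀ i, 1 ≤ i → (f i).im = 0) :
    pev f (star α) = f 0 - star (f 0) + star (pev f α) := by
  have hkey : ∀ i, star (α ^ (i + 1) * f (i + 1)) = (star α) ^ (i + 1) * f (i + 1) := by
    intro i
    rw [star_mul, star_pow]
    have h1 : star (f (i+1)) = f (i+1) := by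
      rw [real_coe (f (i+1)) (hreal (i+1) (by omega))]
      exact Quaternion.star_coe _
    rw [h1, real_coe (f (i+1)) (hreal (i+1) (by omega)), Quaternion.coe_mul_eq_smul,
      Quaternion.mul_coe_eq_smul]
  have hstarsum : Summable fun i => star (α ^ i * f i) := hs.star
  have h2 : star (pev f α) = star (f 0) + ∑' i, (star α) ^ (i + 1) * f (i + 1) := by
    rw [pev, tsum_star, Summable.tsum_eq_zero_add hstarsum, pow_zero, one_mul, tsum_congr hkey]
  rw [pev_split f (star α) hs', h2]
  abel

/-- If `f = g + a₀` with `g` having real coefficients (here: all coefficients `f i`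
for `i ≥ 1` are real) and constant term `f 0` whose imaginary part is that of the
non-real `a₀`, then every zero of `f` lies in the complex plane spanned by `1` and
`I = Im(a₀)/|Im(a₀)|`, and `f` has no spherical zeros. -/
theorem stmt8 (f : ℕ → Quat) (R : ℝ) (hR : 0 < R) (hf : ConvOn f R)
    (hreal : ∀ i, 1 ≤ i → (f i).im = 0) (hnr : (f 0).im ≠ 0) :
    (∀ q : Quat, ‖q‖ < R → pev f q = 0 →
      ∃ x y : ℝ, q = algebraMap ℝ Quat x + y • (‖(f 0).im‖⁻¹ • (f 0).im)) ∧
    ¬∃ α : Quat, ‖α‖ < R ∧ α.im ≠ 0 ∧ ∀ x ∈ Sset α, pev f x = 0 := by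
  constructor
  · intro q hq hz
    have hs := hf q hq
    have hmem := tail_mem_span f q hs hreal
    rw [Submodule.mem_span_pair] at hmem
    obtain ⟨c, d, hcd⟩ := hmem
    have hT : f 0 + (c • (1 : Quat) + d • q) = 0 := by
      rw [hcd, ← pev_split f q hs]; exact hz
    have him : (f 0).im + d • q.im = 0 := by
      have h := congrArg Quaternion.im hT
      simpa [Quaternion.im_one, Quaternion.im_zero] using h
    have hd : d ≠ 0 := by
      intro h0
      rw [h0, zero_smul, add_zero] at him
      exact hnr him
    have h3 : (f 0).im = (-d) • q.im := by
      rw [neg_smul]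
      exact eq_neg_of_add_eq_zero_left him
    have hqim : q.im = (-d⁻¹) • (f 0).im := by
      rw [h3, smul_smul, show (-d⁻¹) * (-d) = 1 by field_simp, one_smul]
    have hn : ‖(f 0).im‖ ≠ 0 := norm_ne_zero_iff.2 hnr
    refine ⟨q.re, (-d⁻¹) * ‖(f 0).im‖, ?_⟩
    conv_lhs => rw [← Quaternion.re_add_im q]
    congr 1
    rw [hqim, smul_smul]
    congr 1
    field_simp
  · rintro ⟨α, hα, -, hv⟩
    have h1 : pev f α = 0 := hv α ⟨rfl, rfl⟩
    have h2 : pev f (star α) = 0 := by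
      refine hv (star α) ⟨?_, norm_star α⟩
      rw [star_star]; exact add_comm _ _
    have h3 := pev_star f α (hf α hα) (hf (star α) (by rwa [norm_star])) hreal
    rw [h1, h2, star_zero, add_zero] at h3
    have h4 : star (f 0) = f 0 := by
      have h := sub_eq_zero.1 h3.symm
      exact h.symm
    apply hnr
    have h5 := congrArg Quaternion.im h4
    rw [Quaternion.im_star] at h5
    have h6 : (2 : ℝ) • (f 0).im = 0 := by
      rw [two_smul]
      nth_rewrite 1 [← h5]
      exact neg_add_cancel _
    rcases smul_eq_zero.1 h6 with h | h
    · norm_num at h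
    · exact h
end
end

section
/- Let f(w) = g(w) + w·a₁ + a₀ be a slice regular function on B_R ⊂ ℍ with g having all real coefficients and at least one of a₀, a₁ non-real. Then f has no spherical zeros, i.e., there is no non-real α with the entire sphere S_α contained in the zero set of f. -/
noncomputable section

/- ### Auxiliary material -/

/-- Real coefficient pair `(c i, d i)` so that `x ^ i = c i + x * d i` on a sphere with
trace `t` and squared norm `n`. -/
def pr (t n : ℝ) : ℕ → ℝ × ℝ
  | 0 => (1, 0)
  | (i+1) => (-n * (pr t n i).2, (pr t n i).1 + t * (pr t n i).2)

lemma pr_pow_eq {t n : ℝ} {x : Quat} (hx : x ^ 2 = x * (t : ℝ) - (n : ℝ)) :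
    ∀ i, x ^ i = ((pr t n i).1 : Quat) + x * ((pr t n i).2 : Quat) := by
  intro i
  induction i with
  | zero => simp [pr]
  | succ i ih =>
    have hc : (((pr t n i).2 : ℝ) : Quat) * x = x * ((pr t n i).2 : Quat) :=
      Quaternion.coe_commutes _ _
    have hc' : (((pr t n i).1 : ℝ) : Quat) * x = x * ((pr t n i).1 : Quat) :=
      Quaternion.coe_commutes _ _
    rw [pow_succ, ih, add_mul, mul_assoc, hc, ← mul_assoc, ← sq, hx]
    push_cast [pr]
    rw [hc']
    noncomm_ring

/-- The imaginary part as a continuous linear map. -/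
def imCLM : Quat →L[ℝ] Quat :=
  { toFun := Quaternion.im
    map_add' := Quaternion.im_add
    map_smul' := fun s a => by simp
    cont := Quaternion.continuous_im }

set_option maxHeartbeats 1000000 in
/-- If `f = g + w·a₁ + a₀` with `g` having real coefficients (here: all coefficients
`f i` for `i ≥ 2` are real) and at least one of `a₀ = f 0`, `a₁ = f 1` non-real,
then `f` has no spherical zeros. -/
theorem stmt9 (f : ℕ → Quat) (R : ℝ) (hR : 0 < R) (hf : ConvOn f R)
    (hreal : ∀ i, 2 ≤ i → (f i).im = 0) (hnr : (f 0).im ≠ 0 ∨ (f 1).im ≠ 0) :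
    ¬∃ α : Quat, ‖α‖ < R ∧ α.im ≠ 0 ∧ ∀ x ∈ Sset α, pev f x = 0 := by
  rintro ⟨α, hαR, hαim, hz⟩
  set t : ℝ := 2 * α.re with ht
  set n : ℝ := ‖α‖ ^ 2 with hn
  have key : ∀ x ∈ Sset α, x ^ 2 = x * (t : ℝ) - (n : ℝ) := by
    rintro x ⟨h1, h2⟩
    have htr : x + star x = ((t : ℝ) : Quat) := by
      rw [h1, Quaternion.self_add_star' α]
    have hs : star x = ((t : ℝ) : Quat) - x := by
      rw [eq_sub_iff_add_eq, add_comm, htr]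
    have hnx : x * star x = ((n : ℝ) : Quat) := by
      rw [Quaternion.self_mul_star]
      congr 1
      rw [Quaternion.normSq_eq_norm_mul_self, h2, hn, sq]
    rw [hs, mul_sub] at hnx
    have h3 : x * (t : ℝ) - x * x = ((n : ℝ) : Quat) := hnx
    rw [sq, eq_sub_iff_add_eq, ← h3]
    abel
  have hα : α ∈ Sset α := ⟨rfl, rfl⟩
  have hsα : star α ∈ Sset α := ⟨by rw [star_star, add_comm], Quaternion.norm_star α⟩
  have hne : α - star α ≠ 0 := by
    intro h
    apply hαim
    have h' : star α = α := (sub_eq_zero.mp h).symm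
    rw [Quaternion.star_eq_self] at h'
    rw [h', Quaternion.im_coe]
  set c : ℕ → ℝ := fun i => (pr t n i).1 with hc
  set d : ℕ → ℝ := fun i => (pr t n i).2 with hd
  have hpowα : ∀ i, α ^ i = ((c i : ℝ) : Quat) + α * (d i : ℝ) := pr_pow_eq (key α hα)
  have hpows : ∀ i, (star α) ^ i = ((c i : ℝ) : Quat) + star α * (d i : ℝ) :=
    pr_pow_eq (key _ hsα)
  set u : ℕ → Quat := fun i => ((c i : ℝ) : Quat) * f i with hu'
  set v : ℕ → Quat := fun i => ((d i : ℝ) : Quat) * f i with hv'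
  have h1 : Summable fun i => α ^ i * f i := hf α hαR
  have h2 : Summable fun i => (star α) ^ i * f i :=
    hf _ (by rw [Quaternion.norm_star]; exact hαR)
  have hdiff : Summable fun i => (α - star α) * v i := by
    have h12 := h1.sub h2
    apply h12.congr
    intro i
    rw [hpowα, hpows, hv']
    noncomm_ring
  have hv : Summable v := by
    have := hdiff.mul_left (α - star α)⁻¹
    apply this.congr
    intro i
    rw [← mul_assoc, inv_mul_cancel₀ hne, one_mul]
  have hu : Summable u := by
    have := h1.sub (hv.mul_left α)
    apply this.congr
    intro i
    rw [hpowα, hu']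
    noncomm_ring
  have sums : ∀ x : Quat, (∀ i, x ^ i = ((c i : ℝ) : Quat) + x * (d i : ℝ)) →
      pev f x = (∑' i, u i) + x * ∑' i, v i := by
    intro x hpow
    rw [pev]
    have : ∀ i, x ^ i * f i = u i + x * v i := by
      intro i
      rw [hpow, hu', hv']
      noncomm_ring
    rw [tsum_congr this, Summable.tsum_add hu (hv.mul_left x), tsum_mul_left]
  have e1 : (∑' i, u i) + α * ∑' i, v i = 0 := by
    rw [← sums α hpowα]; exact hz α hα
  have e2 : (∑' i, u i) + star α * ∑' i, v i = 0 := by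
    rw [← sums (star α) hpows]; exact hz _ hsα
  have hV : (∑' i, v i) = 0 := by
    have h3 : α * ∑' i, v i = star α * ∑' i, v i := by
      have := e1.trans e2.symm
      exact add_left_cancel this
    have h4 : (α - star α) * ∑' i, v i = 0 := by
      rw [sub_mul, h3, sub_self]
    exact (mul_eq_zero.mp h4).resolve_left hne
  have hU : (∑' i, u i) = 0 := by
    rw [hV, mul_zero, add_zero] at e1
    exact e1
  -- compute imaginary parts
  have him : ∀ (g : ℕ → Quat), Summable g → (∑' i, g i).im = ∑' i, (g i).im := by
    intro g hg
    exact (imCLM.map_tsum hg :)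
  have himreal : ∀ (r : ℝ) (q : Quat), q.im = 0 → (((r : ℝ) : Quat) * q).im = 0 := by
    intro r q hq
    rw [Quaternion.coe_mul_eq_smul, Quaternion.im_smul, hq, smul_zero]
  have hd1 : d 1 = 1 := by simp [hd, pr]
  have hd0 : d 0 = 0 := by simp [hd, pr]
  have hc0 : c 0 = 1 := by simp [hc, pr]
  have hc1 : c 1 = 0 := by simp [hc, hd0, pr]
  have hvim : ∀ i, i ≠ 1 → (v i).im = 0 := by
    intro i hi
    match i, hi with
    | 0, _ => rw [hv']; simp [hd0, Quaternion.im_zero]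
    | (j+2), _ => exact himreal _ _ (hreal (j+2) (by omega))
  have hf1 : (f 1).im = 0 := by
    have : (∑' i, (v i).im) = (f 1).im := by
      have hv1 : v 1 = f 1 := by simp [hv', hd1]
      rw [tsum_eq_single 1 hvim, hv1]
    rw [← this, ← him v hv, hV, Quaternion.im_zero]
  have huim : ∀ i, i ≠ 0 → (u i).im = 0 := by
    intro i hi
    match i, hi with
    | 1, _ => rw [hu']; simp [hc1, Quaternion.im_zero]
    | (j+2), _ => exact himreal _ _ (hreal (j+2) (by omega))
  have hf0 : (f 0).im = 0 := by
    have : (∑' i, (u i).im) = (f 0).im := by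
      have hu0 : u 0 = f 0 := by simp [hu', hc0]
      rw [tsum_eq_single 0 huim, hu0]
    rw [← this, ← him u hu, hU, Quaternion.im_zero]
  rcases hnr with h | h
  · exact h hf0
  · exact h hf1
end
end

section
/- Multiplicativity of the normal series: for slice regular functions f, g on B_R ⊂ ℍ (i.e., convergent power series with right quaternionic coefficients), N(f * g) = N(f) · N(g), where N(f) = f * conj(f) and the product on the right is the product of series with real coefficients. -/
noncomputable section

lemma mk_scoef (a b : ℕ → Quat) :
    PowerSeries.mk (scoef a b) = PowerSeries.mk a * PowerSeries.mk b :=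
  PowerSeries.ext fun k => by simp [scoef, PowerSeries.coeff_mul]

lemma swap_sum (F : ℕ × ℕ → Quat) (k : ℕ) :
    ∑ p ∈ Finset.HasAntidiagonal.antidiagonal k, F p = ∑ p ∈ Finset.HasAntidiagonal.antidiagonal k, F (p.2, p.1) :=
  Finset.sum_nbij' (fun p => (p.2, p.1)) (fun p => (p.2, p.1))
    (by simp [Finset.HasAntidiagonal.mem_antidiagonal, add_comm]) (by simp [Finset.HasAntidiagonal.mem_antidiagonal, add_comm])
    (by simp) (by simp) (by simp)

lemma cconj_scoef (a b : ℕ → Quat) :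
    cconj (scoef a b) = scoef (cconj b) (cconj a) := by
  funext k
  simp only [cconj, scoef, star_sum, star_mul]
  exact swap_sum (fun p => star (b p.2) * star (a p.1)) k

lemma Ncoef_star (a : ℕ → Quat) (k : ℕ) : star (Ncoef a k) = Ncoef a k := by
  simp only [Ncoef, scoef, cconj, star_sum, star_mul, star_star]
  exact swap_sum (fun p => a p.2 * star (a p.1)) k

lemma Ncoef_commute (a : ℕ → Quat) (k : ℕ) (x : Quat) : Commute (Ncoef a k) x := by
  have h : Ncoef a k = ((Ncoef a k).re : Quat) :=
    Quaternion.star_eq_self.mp (Ncoef_star a k)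
  rw [h]; exact Quaternion.coe_commute _ _

lemma mk_Ncoef_commute (a : ℕ → Quat) (X : PowerSeries Quat) :
    Commute (PowerSeries.mk (Ncoef a)) X :=
  PowerSeries.ext fun k => by
    rw [PowerSeries.coeff_mul, PowerSeries.coeff_mul, swap_sum]
    exact Finset.sum_congr rfl fun p _ => by
      simp only [PowerSeries.coeff_mk]
      exact (Ncoef_commute a p.2 _).eq


/-- Multiplicativity of the normal series: `N(f * g) = N(f) · N(g)` (equality of the
coefficient sequences of the power series). -/
theorem stmt11 (f g : ℕ → Quat) (R : ℝ) (hR : 0 < R)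
    (hf : ConvOn f R) (hg : ConvOn g R) :
    Ncoef (scoef f g) = scoef (Ncoef f) (Ncoef g) := by
  have hg : PowerSeries.mk g * PowerSeries.mk (cconj g) = PowerSeries.mk (Ncoef g) :=
    (mk_scoef g (cconj g)).symm
  have hf : PowerSeries.mk f * PowerSeries.mk (cconj f) = PowerSeries.mk (Ncoef f) :=
    (mk_scoef f (cconj f)).symm
  have key : PowerSeries.mk (Ncoef (scoef f g))
      = PowerSeries.mk (Ncoef f) * PowerSeries.mk (Ncoef g) := by
    rw [Ncoef, mk_scoef, cconj_scoef, mk_scoef, mk_scoef]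
    calc PowerSeries.mk f * PowerSeries.mk g *
          (PowerSeries.mk (cconj g) * PowerSeries.mk (cconj f))
        = PowerSeries.mk f * (PowerSeries.mk g * PowerSeries.mk (cconj g)) *
            PowerSeries.mk (cconj f) := by
            rw [mul_assoc, mul_assoc, ← mul_assoc (PowerSeries.mk g)]
      _ = PowerSeries.mk f * PowerSeries.mk (Ncoef g) * PowerSeries.mk (cconj f) := by rw [hg]
      _ = PowerSeries.mk (Ncoef g) * PowerSeries.mk f * PowerSeries.mk (cconj f) := by
            rw [(mk_Ncoef_commute g (PowerSeries.mk f)).symm.eq]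
      _ = PowerSeries.mk (Ncoef g) * PowerSeries.mk (Ncoef f) := by rw [mul_assoc, hf]
      _ = PowerSeries.mk (Ncoef f) * PowerSeries.mk (Ncoef g) :=
            (mk_Ncoef_commute g (PowerSeries.mk (Ncoef f))).eq
  funext k
  have := congrArg (PowerSeries.coeff k) key
  simpa [PowerSeries.coeff_mul, scoef] using this
end
end

section
/- (Zero set of a star product) For slice regular functions f, g on B_R ⊂ ℍ: ⋃_{α ∈ V(f*g)} S_α = ⋃_{α ∈ V(f) ∪ V(g)} S_α. In particular, V(f*g) ⊆ ⋃_{α ∈ V(f) ∪ V(g)} S_α, and every zero of f*g is conjugate to a zero of f or of g. -/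
noncomputable section

namespace Stmt12Aux

open Finset

theorem coe_eq_smul_one (n : ℝ) : ((n:ℝ) : Quat) = n • (1 : Quat) := by
  rw [show (1:Quat) = ((1:ℝ):Quat) by norm_cast, Quaternion.smul_coe, mul_one]

def cd (t n : ℝ) : ℕ → ℝ × ℝ
  | 0 => (1, 0)
  | i+1 => (-n * (cd t n i).2, (cd t n i).1 + t * (cd t n i).2)

theorem cd_add (t n : ℝ) (i j : ℕ) :
    (cd t n (i+j)).1 = (cd t n i).1 * (cd t n j).1 - n * ((cd t n i).2 * (cd t n j).2) ∧
    (cd t n (i+j)).2 = (cd t n i).1 * (cd t n j).2 + (cd t n i).2 * (cd t n j).1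
      + t * ((cd t n i).2 * (cd t n j).2) := by
  induction j with
  | zero => simp [cd]
  | succ j ih =>
    have h : i + (j+1) = (i+j)+1 := rfl
    rw [h]
    simp only [cd, ih.1, ih.2]
    constructor <;> ring

theorem quad_rel {t n : ℝ} {q : Quat} (ht : q + star q = (t : Quat)) (hn : ‖q‖^2 = n) :
    q * q = t • q - n • (1 : Quat) := by
  have hs : star q = (t : Quat) - q := eq_sub_of_add_eq' ht
  have h1 : q * ((t:Quat) - q) = ((n : ℝ) : Quat) := by
    rw [← hs, Quaternion.self_mul_star]
    exact congrArg _ (by rw [Quaternion.normSq_eq_norm_mul_self, ← hn]; ring)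
  rw [mul_sub] at h1
  have h2 : q * q = q * (t : Quat) - ((n:ℝ) : Quat) := by
    rw [eq_sub_iff_add_eq, add_comm, ← eq_sub_iff_add_eq]; exact h1.symm
  rw [h2, Quaternion.mul_coe_eq_smul, coe_eq_smul_one]

theorem pow_red {t n : ℝ} {q : Quat} (hq : q * q = t • q - n • (1 : Quat)) (i : ℕ) :
    q ^ i = (cd t n i).1 • (1 : Quat) + (cd t n i).2 • q := by
  induction i with
  | zero => simp [cd]
  | succ i ih =>
    rw [pow_succ, ih, add_mul, smul_mul_assoc, smul_mul_assoc, one_mul, hq]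
    simp only [cd]
    module

theorem abs_re_le (x : Quat) : |x.re| ≤ ‖x‖ := by
  have h := norm_add_le x (star x)
  rw [Quaternion.self_add_star', Quaternion.norm_coe, Quaternion.norm_star] at h
  rw [Real.norm_eq_abs, abs_mul] at h
  norm_num at h
  linarith [abs_nonneg x.re]

/-- bounds on the reduction coefficients for a nonreal point -/
theorem cd_abs {q₀ : Quat} (him : q₀ - ((q₀.re : ℝ) : Quat) ≠ 0) :
    ∃ K : ℝ, 0 < K ∧ ∀ i, |(cd (2*q₀.re) (‖q₀‖^2) i).1| ≤ K * ‖q₀‖^i ∧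
      |(cd (2*q₀.re) (‖q₀‖^2) i).2| ≤ K * ‖q₀‖^i := by
  set t := 2*q₀.re
  set n := ‖q₀‖^2
  have hq : q₀ * q₀ = t • q₀ - n • (1:Quat) :=
    quad_rel (Quaternion.self_add_star' q₀) rfl
  set m := ‖q₀ - ((q₀.re : ℝ) : Quat)‖ with hm
  have hm0 : 0 < m := norm_pos_iff.mpr him
  refine ⟨1 + 2/m + 2*‖q₀‖/m, by positivity, fun i => ?_⟩
  set c := (cd t n i).1
  set d := (cd t n i).2
  have h := pow_red hq i
  have hre : (q₀ ^ i).re = c + d * q₀.re := by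
    rw [h]; simp [Quaternion.re_smul, Quaternion.re_one]; rfl
  have him' : q₀ ^ i - (((q₀^i).re : ℝ) : Quat) = d • (q₀ - ((q₀.re : ℝ) : Quat)) := by
    rw [hre, h, Quaternion.coe_add, ← Quaternion.smul_coe, coe_eq_smul_one]
    module
  have hd : |d| * m = ‖q₀ ^ i - (((q₀^i).re : ℝ) : Quat)‖ := by
    rw [him', norm_smul, Real.norm_eq_abs]
  have hni : ‖q₀ ^ i‖ = ‖q₀‖^i := norm_pow q₀ i
  have hdb : |d| * m ≤ 2 * ‖q₀‖^i := by
    rw [hd]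
    calc ‖q₀ ^ i - (((q₀^i).re : ℝ) : Quat)‖ ≤ ‖q₀ ^ i‖ + ‖(((q₀^i).re : ℝ) : Quat)‖ :=
          norm_sub_le _ _
      _ ≤ ‖q₀‖^i + ‖q₀‖^i := by
          rw [hni, Quaternion.norm_coe, Real.norm_eq_abs]
          have := abs_re_le (q₀ ^ i)
          rw [hni] at this
          linarith
      _ = 2 * ‖q₀‖^i := by ring
  have hd2 : |d| ≤ 2/m * ‖q₀‖^i := by
    rw [div_mul_eq_mul_div, le_div_iff₀ hm0]
    linarith
  have hc : (c : ℝ) • (1:Quat) = q₀ ^ i - d • q₀ := by rw [h]; abel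
  have hcb : |c| ≤ ‖q₀‖^i + |d| * ‖q₀‖ := by
    have hn1 : ‖(c : ℝ) • (1:Quat)‖ = |c| := by
      rw [norm_smul, Real.norm_eq_abs, norm_one, mul_one]
    rw [← hn1, hc]
    calc ‖q₀ ^ i - d • q₀‖ ≤ ‖q₀ ^ i‖ + ‖d • q₀‖ := norm_sub_le _ _
      _ = ‖q₀‖^i + |d| * ‖q₀‖ := by rw [hni, norm_smul, Real.norm_eq_abs]
  have hq0 : (0:ℝ) ≤ ‖q₀‖^i := by positivity
  have e1 : 2/m * ‖q₀‖^i * ‖q₀‖ = 2*‖q₀‖/m * ‖q₀‖^i := by ring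
  have hdq : |d| * ‖q₀‖ ≤ 2*‖q₀‖/m * ‖q₀‖^i := by
    rw [← e1]
    exact mul_le_mul_of_nonneg_right hd2 (norm_nonneg _)
  have h2m : (0:ℝ) ≤ 2/m * ‖q₀‖^i := by positivity
  have h2m' : (0:ℝ) ≤ 2*‖q₀‖/m * ‖q₀‖^i := by positivity
  constructor
  · nlinarith
  · nlinarith


/-- base norm summability at radius `‖q₀‖` -/
theorem base_summable {a : ℕ → Quat} {R : ℝ} (ha : ConvOn a R) {q₀ : Quat} (h0 : ‖q₀‖ < R) :
    Summable (fun i => ‖q₀‖^i * ‖a i‖) := by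
  have h1 : ‖((‖q₀‖ : ℝ) : Quat)‖ < R := by
    rw [Quaternion.norm_coe, Real.norm_eq_abs, abs_norm]; exact h0
  have h2 := ha _ h1
  have h3 := summable_norm_iff.mpr h2
  refine h3.congr fun i => ?_
  rw [norm_mul, norm_pow, Quaternion.norm_coe, Real.norm_eq_abs, abs_norm]

theorem summable_coeff {a : ℕ → Quat} {R : ℝ} (ha : ConvOn a R) {q₀ : Quat} (h0 : ‖q₀‖ < R)
    {e : ℕ → ℝ} {K : ℝ} (hK : ∀ i, |e i| ≤ K * ‖q₀‖^i) :
    Summable (fun i => ‖e i • a i‖) := by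
  have hb := (base_summable ha h0).mul_left K
  refine Summable.of_nonneg_of_le (fun i => norm_nonneg _) (fun i => ?_) hb
  rw [norm_smul, Real.norm_eq_abs]
  calc |e i| * ‖a i‖ ≤ (K * ‖q₀‖^i) * ‖a i‖ :=
        mul_le_mul_of_nonneg_right (hK i) (norm_nonneg _)
    _ = K * (‖q₀‖^i * ‖a i‖) := by ring

/-- evaluation via the linear reduction on a sphere -/
theorem pev_red {t n : ℝ} {a : ℕ → Quat}
    (hA : Summable fun i => (cd t n i).1 • a i)
    (hB : Summable fun i => (cd t n i).2 • a i)
    {q : Quat} (hq : q * q = t • q - n • (1 : Quat)) :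
    (Summable fun i => q ^ i * a i) ∧
    pev a q = (∑' i, (cd t n i).1 • a i) + q * ∑' i, (cd t n i).2 • a i := by
  have he : ∀ i, q ^ i * a i = (cd t n i).1 • a i + q * ((cd t n i).2 • a i) := fun i => by
    rw [pow_red hq i, add_mul, smul_mul_assoc, one_mul, smul_mul_assoc, mul_smul_comm]
  have hs : Summable fun i => q ^ i * a i :=
    ((hA.add (hB.mul_left q)).congr fun i => (he i).symm)
  refine ⟨hs, ?_⟩
  rw [pev, tsum_congr he, Summable.tsum_add hA (hB.mul_left q), tsum_mul_left]

/-- the reduction coefficients of a star product -/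
theorem scoef_red (t n : ℝ) {f g : ℕ → Quat}
    (hfc : Summable fun i => ‖(cd t n i).1 • f i‖)
    (hfd : Summable fun i => ‖(cd t n i).2 • f i‖)
    (hgc : Summable fun i => ‖(cd t n i).1 • g i‖)
    (hgd : Summable fun i => ‖(cd t n i).2 • g i‖) :
    (Summable fun k => (cd t n k).1 • scoef f g k) ∧
    (Summable fun k => (cd t n k).2 • scoef f g k) ∧
    (∑' k, (cd t n k).1 • scoef f g k) =
      (∑' i, (cd t n i).1 • f i) * (∑' j, (cd t n j).1 • g j)
        - n • ((∑' i, (cd t n i).2 • f i) * (∑' j, (cd t n j).2 • g j)) ∧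
    (∑' k, (cd t n k).2 • scoef f g k) =
      (∑' i, (cd t n i).1 • f i) * (∑' j, (cd t n j).2 • g j)
        + (∑' i, (cd t n i).2 • f i) * (∑' j, (cd t n j).1 • g j)
        + t • ((∑' i, (cd t n i).2 • f i) * (∑' j, (cd t n j).2 • g j)) := by
  have hc : ∀ k, (cd t n k).1 • scoef f g k =
      (∑ p ∈ antidiagonal k, ((cd t n p.1).1 • f p.1) * ((cd t n p.2).1 • g p.2))
        - n • (∑ p ∈ antidiagonal k, ((cd t n p.1).2 • f p.1) * ((cd t n p.2).2 • g p.2)) := by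
    intro k
    rw [scoef, Finset.smul_sum, Finset.smul_sum, ← Finset.sum_sub_distrib]
    refine Finset.sum_congr rfl fun p hp => ?_
    have hk : p.1 + p.2 = k := Finset.HasAntidiagonal.mem_antidiagonal.mp hp
    rw [smul_mul_smul_comm, smul_mul_smul_comm, ← hk, (cd_add t n p.1 p.2).1]
    module
  have hd : ∀ k, (cd t n k).2 • scoef f g k =
      (∑ p ∈ antidiagonal k, ((cd t n p.1).1 • f p.1) * ((cd t n p.2).2 • g p.2))
        + (∑ p ∈ antidiagonal k, ((cd t n p.1).2 • f p.1) * ((cd t n p.2).1 • g p.2))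
        + t • (∑ p ∈ antidiagonal k, ((cd t n p.1).2 • f p.1) * ((cd t n p.2).2 • g p.2)) := by
    intro k
    rw [scoef, Finset.smul_sum, Finset.smul_sum, ← Finset.sum_add_distrib,
      ← Finset.sum_add_distrib]
    refine Finset.sum_congr rfl fun p hp => ?_
    have hk : p.1 + p.2 = k := Finset.HasAntidiagonal.mem_antidiagonal.mp hp
    rw [smul_mul_smul_comm, smul_mul_smul_comm, smul_mul_smul_comm, ← hk,
      (cd_add t n p.1 p.2).2]
    module
  have Scc : Summable fun k => ∑ p ∈ antidiagonal k, ((cd t n p.1).1 • f p.1) * ((cd t n p.2).1 • g p.2) :=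
    (summable_norm_sum_mul_antidiagonal_of_summable_norm hfc hgc).of_norm
  have Sdd : Summable fun k => ∑ p ∈ antidiagonal k, ((cd t n p.1).2 • f p.1) * ((cd t n p.2).2 • g p.2) :=
    (summable_norm_sum_mul_antidiagonal_of_summable_norm hfd hgd).of_norm
  have Scd : Summable fun k => ∑ p ∈ antidiagonal k, ((cd t n p.1).1 • f p.1) * ((cd t n p.2).2 • g p.2) :=
    (summable_norm_sum_mul_antidiagonal_of_summable_norm hfc hgd).of_norm
  have Sdc : Summable fun k => ∑ p ∈ antidiagonal k, ((cd t n p.1).2 • f p.1) * ((cd t n p.2).1 • g p.2) :=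
    (summable_norm_sum_mul_antidiagonal_of_summable_norm hfd hgc).of_norm
  have S1 : Summable fun k => (cd t n k).1 • scoef f g k :=
    ((Scc.sub (Sdd.const_smul n)).congr fun k => (hc k).symm)
  have S2 : Summable fun k => (cd t n k).2 • scoef f g k :=
    (((Scd.add Sdc).add (Sdd.const_smul t)).congr fun k => (hd k).symm)
  refine ⟨S1, S2, ?_, ?_⟩
  · rw [tsum_congr hc, Summable.tsum_sub Scc (Sdd.const_smul n),
      tsum_mul_tsum_eq_tsum_sum_antidiagonal_of_summable_norm hfc hgc,
      tsum_mul_tsum_eq_tsum_sum_antidiagonal_of_summable_norm hfd hgd,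
      (Sdd.hasSum.const_smul n).tsum_eq]
  · rw [tsum_congr hd, Summable.tsum_add (Scd.add Sdc) (Sdd.const_smul t), Summable.tsum_add Scd Sdc,
      tsum_mul_tsum_eq_tsum_sum_antidiagonal_of_summable_norm hfc hgd,
      tsum_mul_tsum_eq_tsum_sum_antidiagonal_of_summable_norm hfd hgc,
      tsum_mul_tsum_eq_tsum_sum_antidiagonal_of_summable_norm hfd hgd,
      (Sdd.hasSum.const_smul t).tsum_eq]


theorem Sset_self (α : Quat) : α ∈ Sset α := ⟨rfl, rfl⟩

theorem Sset_eq {x α : Quat} (h : x ∈ Sset α) : Sset x = Sset α := by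
  ext y
  exact ⟨fun hy => ⟨hy.1.trans h.1, hy.2.trans h.2⟩,
    fun hy => ⟨hy.1.trans h.1.symm, hy.2.trans h.2.symm⟩⟩

theorem star_mem_Sset (α : Quat) : star α ∈ Sset α := by
  refine ⟨?_, Quaternion.norm_star α⟩
  rw [star_star, add_comm]

theorem mul_re_comm (a b : Quat) : (a*b).re = (b*a).re := by
  simp only [Quaternion.re_mul]; ring

theorem conj_mem_Sset {c : Quat} (hc : c ≠ 0) (x : Quat) : c * x * c⁻¹ ∈ Sset x := by
  constructor
  · rw [Quaternion.self_add_star', Quaternion.self_add_star']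
    have h : (c * x * c⁻¹).re = x.re := by
      rw [mul_assoc, mul_re_comm, mul_assoc, inv_mul_cancel₀ hc, mul_one]
    rw [h]
  · show ‖c * x * c⁻¹‖ = ‖x‖
    rw [norm_mul, norm_mul, norm_inv]
    have h : ‖c‖ ≠ 0 := norm_ne_zero_iff.mpr hc
    field_simp

theorem key_alg (t n : ℝ) {q Af Bf Ag Bg : Quat} (hqr : q * q = t • q - n • (1:Quat)) :
    (Af*Ag - n•(Bf*Bg)) + q*(Af*Bg + Bf*Ag + t•(Bf*Bg))
      = (Af + q*Bf)*Ag + q*((Af + q*Bf)*Bg) := by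
  have e1 : q*(q*(Bf*Bg)) = t•(q*(Bf*Bg)) - n•(Bf*Bg) := by
    rw [← mul_assoc, hqr, sub_mul, smul_mul_assoc, smul_mul_assoc, one_mul]
  simp only [add_mul, mul_add, mul_assoc, mul_smul_comm, smul_mul_assoc]
  rw [e1]
  module

/-- the main engine: linear reduction of `f`, `g` and `f*g` on a sphere -/
theorem engine {f g : ℕ → Quat} {R : ℝ} (hf : ConvOn f R) (hg : ConvOn g R)
    {q₀ : Quat} (h0 : ‖q₀‖ < R) (him : q₀ - ((q₀.re : ℝ) : Quat) ≠ 0) :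
    ∃ Af Bf Ag Bg : Quat,
      (∀ q ∈ Sset q₀, pev f q = Af + q * Bf) ∧
      (∀ q ∈ Sset q₀, pev g q = Ag + q * Bg) ∧
      (∀ q ∈ Sset q₀, pev (scoef f g) q = pev f q * Ag + q * (pev f q * Bg)) := by
  obtain ⟨K, hK0, hK⟩ := cd_abs him
  set t := 2*q₀.re with hts
  set n := ‖q₀‖^2 with hns
  have nfc := summable_coeff hf h0 (fun i => (hK i).1)
  have nfd := summable_coeff hf h0 (fun i => (hK i).2)
  have ngc := summable_coeff hg h0 (fun i => (hK i).1)
  have ngd := summable_coeff hg h0 (fun i => (hK i).2)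
  obtain ⟨S1, S2, hC, hD⟩ := scoef_red t n nfc nfd ngc ngd
  refine ⟨∑' i, (cd t n i).1 • f i, ∑' i, (cd t n i).2 • f i,
    ∑' i, (cd t n i).1 • g i, ∑' i, (cd t n i).2 • g i, ?_, ?_, ?_⟩
  all_goals intro q hq
  case _ =>
    have hqt : q + star q = ((t : ℝ) : Quat) := hq.1.trans (Quaternion.self_add_star' q₀)
    have hqr : q * q = t • q - n • (1:Quat) := quad_rel hqt (by rw [hq.2])
    exact (pev_red nfc.of_norm nfd.of_norm hqr).2
  case _ =>
    have hqt : q + star q = ((t : ℝ) : Quat) := hq.1.trans (Quaternion.self_add_star' q₀)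
    have hqr : q * q = t • q - n • (1:Quat) := quad_rel hqt (by rw [hq.2])
    exact (pev_red ngc.of_norm ngd.of_norm hqr).2
  case _ =>
    have hqt : q + star q = ((t : ℝ) : Quat) := hq.1.trans (Quaternion.self_add_star' q₀)
    have hqr : q * q = t • q - n • (1:Quat) := quad_rel hqt (by rw [hq.2])
    set Af := ∑' i, (cd t n i).1 • f i
    set Bf := ∑' i, (cd t n i).2 • f i
    set Ag := ∑' i, (cd t n i).1 • g i
    set Bg := ∑' i, (cd t n i).2 • g i
    have evf : pev f q = Af + q * Bf := (pev_red nfc.of_norm nfd.of_norm hqr).2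
    have evfg := (pev_red S1 S2 hqr).2
    rw [evfg, hC, hD, evf]
    exact key_alg t n hqr


theorem pev_scoef_real {f g : ℕ → Quat} {R : ℝ} (hf : ConvOn f R) (hg : ConvOn g R)
    {r : Quat} (hr : r = ((r.re : ℝ) : Quat)) (hR : ‖r‖ < R) :
    pev (scoef f g) r = pev f r * pev g r := by
  have hfn : Summable fun i => ‖r ^ i * f i‖ := summable_norm_iff.mpr (hf r hR)
  have hgn : Summable fun i => ‖r ^ i * g i‖ := summable_norm_iff.mpr (hg r hR)
  have hcomm : ∀ x : Quat, Commute r x := fun x => by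
    rw [hr]; exact (Quaternion.coe_commute _ x)
  rw [pev, pev, pev, tsum_mul_tsum_eq_tsum_sum_antidiagonal_of_summable_norm hfn hgn]
  refine tsum_congr fun k => ?_
  rw [scoef, Finset.mul_sum]
  refine Finset.sum_congr rfl fun p hp => ?_
  have hk : p.1 + p.2 = k := Finset.HasAntidiagonal.mem_antidiagonal.mp hp
  have hcp : r ^ p.2 * f p.1 = f p.1 * r ^ p.2 := ((hcomm (f p.1)).pow_left p.2).eq
  rw [← hk]
  calc r ^ (p.1+p.2) * (f p.1 * g p.2)
      = r ^ p.1 * (r ^ p.2 * (f p.1 * g p.2)) := by rw [pow_add, mul_assoc]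
    _ = r ^ p.1 * ((r ^ p.2 * f p.1) * g p.2) := by rw [mul_assoc]
    _ = r ^ p.1 * ((f p.1 * r ^ p.2) * g p.2) := by rw [hcp]
    _ = (r ^ p.1 * f p.1) * (r ^ p.2 * g p.2) := by simp only [mul_assoc]

/-- the full zero-set statement, nonreal case helper: a zero of `g` on a sphere
produces a zero of `f*g` on the same sphere -/
theorem gzero_case {f g : ℕ → Quat} {R : ℝ} (hf : ConvOn f R) (hg : ConvOn g R)
    {γ : Quat} (hγR : ‖γ‖ < R) (him : γ - ((γ.re : ℝ) : Quat) ≠ 0)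
    (hγ0 : pev g γ = 0) :
    ∃ q ∈ Sset γ, pev (scoef f g) q = 0 := by
  obtain ⟨Af, Bf, Ag, Bg, evf, evg, evfg⟩ := engine hf hg hγR him
  have hγS : γ ∈ Sset γ := Sset_self γ
  have hg0 : Ag + γ * Bg = 0 := by rw [← evg γ hγS]; exact hγ0
  by_cases hz : ∃ q ∈ Sset γ, pev f q = 0
  · obtain ⟨q, hqS, hq0⟩ := hz
    refine ⟨q, hqS, ?_⟩
    rw [evfg q hqS, hq0, zero_mul, zero_mul, mul_zero, add_zero]
  · push_neg at hz
    set P := Af + Bf * star γ with hP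
    have hPne : P ≠ 0 := by
      intro hP0
      by_cases hBf : Bf = 0
      · apply hz γ hγS
        rw [hP, hBf, zero_mul, add_zero] at hP0
        rw [evf γ hγS, hBf, mul_zero, add_zero]
        exact hP0
      · set q₁ := Bf * star γ * Bf⁻¹ with hq₁
        have hq₁S : q₁ ∈ Sset γ := by
          have h1 := conj_mem_Sset hBf (star γ)
          rw [← Sset_eq (star_mem_Sset γ)]
          exact h1
        apply hz q₁ hq₁S
        rw [evf q₁ hq₁S, hq₁, mul_assoc (Bf * star γ), inv_mul_cancel₀ hBf, mul_one]
        exact hP0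
    refine ⟨P * γ * P⁻¹, conj_mem_Sset hPne γ, ?_⟩
    set q := P * γ * P⁻¹ with hqdef
    have hqS : q ∈ Sset γ := conj_mem_Sset hPne γ
    have hqP : q * P = P * γ := by rw [hqdef, mul_assoc, inv_mul_cancel₀ hPne, mul_one]
    have ht : q + star q = ((2*γ.re : ℝ) : Quat) := hqS.1.trans (Quaternion.self_add_star' γ)
    have hqr : q*q = (2*γ.re) • q - (‖γ‖^2) • (1:Quat) := quad_rel ht (by rw [hqS.2])
    have hsγ : star γ = ((2*γ.re : ℝ):Quat) - γ := eq_sub_of_add_eq' (Quaternion.self_add_star' γ)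
    have hnγ : Quaternion.normSq γ = ‖γ‖^2 := by
      rw [Quaternion.normSq_eq_norm_mul_self, sq]
    have hkey : q * pev f q = pev f q * γ := by
      rw [evf q hqS]
      have HL : q * (Af + Bf * star γ)
          = q*Af + ((2*γ.re)•(q*Bf) - q*(Bf*γ)) := by
        rw [hsγ, mul_sub, Quaternion.mul_coe_eq_smul, mul_add, mul_sub, mul_smul_comm]
      have HR : (Af + Bf * star γ) * γ = Af*γ + (‖γ‖^2)•Bf := by
        rw [add_mul, mul_assoc, Quaternion.star_mul_self, hnγ, Quaternion.mul_coe_eq_smul]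
      have H2 : q*Af + (2*γ.re)•(q*Bf) = Af*γ + (‖γ‖^2)•Bf + q*(Bf*γ) := by
        have H := (HL.symm.trans hqP).trans HR
        rw [← H]; abel
      have e1 : q*(q*Bf) = (2*γ.re)•(q*Bf) - (‖γ‖^2)•Bf := by
        rw [← mul_assoc, hqr, sub_mul, smul_mul_assoc, smul_mul_assoc, one_mul]
      calc q * (Af + q*Bf) = q*Af + ((2*γ.re)•(q*Bf) - (‖γ‖^2)•Bf) := by
            rw [mul_add, e1]
        _ = (q*Af + (2*γ.re)•(q*Bf)) - (‖γ‖^2)•Bf := by abel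
        _ = (Af*γ + (‖γ‖^2)•Bf + q*(Bf*γ)) - (‖γ‖^2)•Bf := by rw [H2]
        _ = Af*γ + (q*Bf)*γ := by rw [← mul_assoc q Bf γ]; abel
        _ = (Af + q*Bf)*γ := by rw [add_mul]
    rw [evfg q hqS, ← mul_assoc, hkey, mul_assoc, ← mul_add, hg0, mul_zero]

end Stmt12Aux

open Stmt12Aux

/-- Zeros of a star product: the union of the conjugacy classes of the zeros of
`f * g` equals the union of the conjugacy classes of the zeros of `f` and of `g`;
in particular `V(f*g)` is contained in the latter union. -/
theorem stmt12 (f g : ℕ → Quat) (R : ℝ) (hR : 0 < R)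
    (hf : ConvOn f R) (hg : ConvOn g R) :
    (⋃ α ∈ Vset (scoef f g) R, Sset α) = ⋃ α ∈ Vset f R ∪ Vset g R, Sset α ∧
    Vset (scoef f g) R ⊆ ⋃ α ∈ Vset f R ∪ Vset g R, Sset α := by

  have key : (⋃ α ∈ Vset (scoef f g) R, Sset α) = ⋃ α ∈ Vset f R ∪ Vset g R, Sset α := by
    ext x
    simp only [Set.mem_iUnion, exists_prop, Set.mem_union]
    constructor
    · rintro ⟨β, ⟨hβR, hβ0⟩, hxβ⟩
      by_cases him : β - ((β.re : ℝ) : Quat) = 0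
      · have hprod : pev f β * pev g β = 0 := by
          rw [← pev_scoef_real hf hg (sub_eq_zero.mp him) hβR]; exact hβ0
        rcases mul_eq_zero.mp hprod with h | h
        · exact ⟨β, Or.inl ⟨hβR, h⟩, hxβ⟩
        · exact ⟨β, Or.inr ⟨hβR, h⟩, hxβ⟩
      · obtain ⟨Af, Bf, Ag, Bg, evf, evg, evfg⟩ := engine hf hg hβR him
        have hβS : β ∈ Sset β := Sset_self β
        by_cases hf0 : pev f β = 0
        · exact ⟨β, Or.inl ⟨hβR, hf0⟩, hxβ⟩
        · set F := pev f β with hF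
          have h1 : F * Ag + β * (F * Bg) = 0 := by rw [← evfg β hβS]; exact hβ0
          set q' := F⁻¹ * β * F with hq'def
          have hq'S : q' ∈ Sset β := by
            have h := conj_mem_Sset (inv_ne_zero hf0) β
            rwa [inv_inv] at h
          have hgq' : pev g q' = 0 := by
            have hFq : F * q' = β * F := by
              rw [hq'def, ← mul_assoc, ← mul_assoc, mul_inv_cancel₀ hf0, one_mul]
            have h2 : F * (Ag + q' * Bg) = F * Ag + β * (F * Bg) := by
              rw [mul_add, ← mul_assoc, hFq, mul_assoc]
            have h3 : F * (Ag + q' * Bg) = 0 := h2.trans h1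
            have h4 := (mul_eq_zero.mp h3).resolve_left hf0
            rw [evg q' hq'S]
            exact h4
          refine ⟨q', Or.inr ⟨?_, hgq'⟩, ?_⟩
          · rw [hq'S.2]; exact hβR
          · rw [Sset_eq hq'S]; exact hxβ
    · rintro ⟨γ, hγ | hγ, hxγ⟩
      · obtain ⟨hγR, hγ0⟩ := hγ
        have h0 : pev (scoef f g) γ = 0 := by
          by_cases him : γ - ((γ.re : ℝ) : Quat) = 0
          · rw [pev_scoef_real hf hg (sub_eq_zero.mp him) hγR, hγ0, zero_mul]
          · obtain ⟨Af, Bf, Ag, Bg, evf, evg, evfg⟩ := engine hf hg hγR him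
            rw [evfg γ (Sset_self γ), hγ0, zero_mul, zero_mul, mul_zero, add_zero]
        exact ⟨γ, ⟨hγR, h0⟩, hxγ⟩
      · obtain ⟨hγR, hγ0⟩ := hγ
        by_cases him : γ - ((γ.re : ℝ) : Quat) = 0
        · have h0 : pev (scoef f g) γ = 0 := by
            rw [pev_scoef_real hf hg (sub_eq_zero.mp him) hγR, hγ0, mul_zero]
          exact ⟨γ, ⟨hγR, h0⟩, hxγ⟩
        · obtain ⟨q, hqS, hq0⟩ := gzero_case hf hg hγR him hγ0
          refine ⟨q, ⟨?_, hq0⟩, ?_⟩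
          · rw [hqS.2]; exact hγR
          · rw [Sset_eq hqS]; exact hxγ
  refine ⟨key, ?_⟩
  rw [← key]
  intro q hq
  exact Set.mem_biUnion hq (Sset_self q)
end
end
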